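/- arXiv:2311.13167 — 7 statements merged into one kernel-verified Lean document; each statement's English description precedes it below -/
import Mathlib

section
/- Let f : ℝ^n × ℝ^m → ℝ and g : ℝ^n × ℝ^m → ℝ^p be continuous. Assume that for every x ∈ ℝ^n the function u ↦ f(x,u) is strictly convex, each component u ↦ g_i(x,u) is convex, and the problem P(x) has a minimizer (hence a unique minimizer u*(x)). Then, for any x₀ ∈ ℝ^n, the map u* is locally bounded at x₀ if and only if local compact feasibility holds at x₀. -/
open Set Filter

set_option maxHeartbeats 1000000 in
/-- For continuous problem data with `f(x,·)` strictly convex, each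
`g_i(x,·)` convex, and a (unique) minimizer `u*(x)` of `P(x)` for every `x`, the map
`u*` is locally bounded at `x₀` if and only if local compact feasibility holds at `x₀`. -/
theorem stmt_4 {n m p : ℕ}
    (f : EuclideanSpace ℝ (Fin n) × EuclideanSpace ℝ (Fin m) → ℝ)
    (g : EuclideanSpace ℝ (Fin n) × EuclideanSpace ℝ (Fin m) → EuclideanSpace ℝ (Fin p))
    (ustar : EuclideanSpace ℝ (Fin n) → EuclideanSpace ℝ (Fin m))
    (hf : Continuous f) (hg : Continuous g)
    (hstrict : ∀ x, StrictConvexOn ℝ univ fun u => f (x, u))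
    (hgconv : ∀ x (i : Fin p), ConvexOn ℝ univ fun u => g (x, u) i)
    (hmin : ∀ x, (∀ i, g (x, ustar x) i ≤ 0) ∧
      ∀ u, (∀ i, g (x, u) i ≤ 0) → f (x, ustar x) ≤ f (x, u))
    (x₀ : EuclideanSpace ℝ (Fin n)) :
    (∃ U ∈ nhds x₀, ∃ B : ℝ, 0 < B ∧ ∀ x ∈ U, ‖ustar x‖ ≤ B) ↔
    (∃ K : Set (EuclideanSpace ℝ (Fin m)), IsCompact K ∧ ∃ δ : ℝ, 0 < δ ∧
      ∀ y : EuclideanSpace ℝ (Fin n), ‖y - x₀‖ < δ → ∃ u ∈ K, ∀ i, g (y, u) i ≤ 0) := by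
  constructor
  · rintro ⟨U, hU, B, hB, hbd⟩
    obtain ⟨δ, hδ, hball⟩ := Metric.mem_nhds_iff.mp hU
    refine ⟨Metric.closedBall 0 B, isCompact_closedBall 0 B, δ, hδ, fun y hy => ?_⟩
    have hyU : y ∈ U := hball (by rwa [Metric.mem_ball, dist_eq_norm])
    refine ⟨ustar y, ?_, (hmin y).1⟩
    simpa [Metric.mem_closedBall, dist_eq_norm] using hbd y hyU
  · rintro ⟨K, hK, δ, hδ, hfeas⟩
    by_contra hnb
    push_neg at hnb
    obtain ⟨R₀, hR₀⟩ := isBounded_iff_forall_norm_le.mp hK.isBounded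
    set R : ℝ := max R₀ 0 with hRdef
    have hR : ∀ v ∈ K, ‖v‖ ≤ R := fun v hv => (hR₀ v hv).trans (le_max_left _ _)
    have hR0 : 0 ≤ R := le_max_right _ _
    -- choose a sequence xₖ → x₀ with ‖ustar xₖ‖ → ∞
    have hxex : ∀ k : ℕ, ∃ x', ‖x' - x₀‖ < min δ (1 / (k + 1)) ∧
        (k : ℝ) + 1 + R < ‖ustar x'‖ := by
      intro k
      have hpos : (0 : ℝ) < min δ (1 / (k + 1)) := lt_min hδ (by positivity)
      obtain ⟨x', hx'U, hx'⟩ := hnb (Metric.ball x₀ (min δ (1 / (k + 1))))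
        (Metric.ball_mem_nhds _ hpos) ((k : ℝ) + 1 + R) (by positivity)
      exact ⟨x', by rwa [Metric.mem_ball, dist_eq_norm] at hx'U, hx'⟩
    choose x hx1 hx2 using hxex
    have hxδ : ∀ k, ‖x k - x₀‖ < δ := fun k => (hx1 k).trans_le (min_le_left _ _)
    choose u hu1 hu2 using fun k => hfeas (x k) (hxδ k)
    set L : ℕ → ℝ := fun k => ‖ustar (x k) - u k‖ with hLdef
    have hL : ∀ k : ℕ, (k : ℝ) + 1 < L k := by
      intro k
      have h1 : ‖ustar (x k)‖ - ‖u k‖ ≤ L k := norm_sub_norm_le _ _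
      have h2 := hR (u k) (hu1 k)
      have h3 := hx2 k
      linarith
    have hLpos : ∀ k, 0 < L k := fun k => lt_of_le_of_lt (by positivity) (hL k)
    have hLne : ∀ k, ustar (x k) - u k ≠ 0 := by
      intro k h0
      have := hLpos k
      rw [hLdef] at this
      simp only [h0, norm_zero] at this
      exact lt_irrefl _ this
    set d : ℕ → EuclideanSpace ℝ (Fin m) := fun k => (L k)⁻¹ • (ustar (x k) - u k) with hddef
    have hdsph : ∀ k, d k ∈ Metric.sphere (0 : EuclideanSpace ℝ (Fin m)) 1 := by
      intro k
      rw [mem_sphere_zero_iff_norm]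
      exact norm_smul_inv_norm (𝕜 := ℝ) (hLne k)
    -- compact product, convergent subsequence
    have hKP : IsCompact (K ×ˢ Metric.sphere (0 : EuclideanSpace ℝ (Fin m)) 1) :=
      hK.prod (isCompact_sphere _ _)
    obtain ⟨⟨ub, dd⟩, hmemP, φ, hφ, hconvP⟩ :=
      hKP.tendsto_subseq (x := fun k => (u k, d k)) (fun k => ⟨hu1 k, hdsph k⟩)
    have hu_t : Tendsto (fun k => u (φ k)) atTop (nhds ub) :=
      (continuous_fst.tendsto _).comp hconvP
    have hd_t : Tendsto (fun k => d (φ k)) atTop (nhds dd) :=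
      (continuous_snd.tendsto _).comp hconvP
    have hx_t : Tendsto (fun k => x (φ k)) atTop (nhds x₀) := by
      have h0 : Tendsto (fun k : ℕ => ‖x k - x₀‖) atTop (nhds 0) := by
        refine squeeze_zero (fun k => norm_nonneg _) (fun k => ?_)
          tendsto_one_div_add_atTop_nhds_zero_nat
        exact ((hx1 k).le.trans (min_le_right _ _))
      have : Tendsto x atTop (nhds x₀) := tendsto_iff_norm_sub_tendsto_zero.mpr h0
      exact this.comp hφ.tendsto_atTop
    -- key pointwise inequalities along segments
    have key : ∀ (j k : ℕ), (j : ℝ) ≤ L k →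
        (∀ i, g (x k, u k + (j : ℝ) • d k) i ≤ 0) ∧
        f (x k, u k + (j : ℝ) • d k) ≤ f (x k, u k) := by
      intro j k hjk
      have hLp := hLpos k
      set t : ℝ := j / L k with htdef
      have ht0 : 0 ≤ t := div_nonneg (Nat.cast_nonneg j) hLp.le
      have ht1 : t ≤ 1 := (div_le_one hLp).mpr hjk
      have hrep : u k + (j : ℝ) • d k = (1 - t) • u k + t • ustar (x k) := by
        rw [hddef, htdef, div_eq_mul_inv]
        module
      have hfu : f (x k, ustar (x k)) ≤ f (x k, u k) := (hmin (x k)).2 (u k) (hu2 k)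
      constructor
      · intro i
        have hc := (hgconv (x k) i).2 (mem_univ (u k)) (mem_univ (ustar (x k)))
          (by linarith : (0:ℝ) ≤ 1 - t) ht0 (by ring)
        simp only [smul_eq_mul] at hc
        rw [hrep]
        have h1 := hu2 k i
        have h2 := (hmin (x k)).1 i
        nlinarith
      · have hc := ((hstrict (x k)).convexOn).2 (mem_univ (u k)) (mem_univ (ustar (x k)))
          (by linarith : (0:ℝ) ≤ 1 - t) ht0 (by ring)
        simp only [smul_eq_mul] at hc
        rw [hrep]
        nlinarith
    -- claim A: the limit ray from ub in direction dd is feasible with bounded f-values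
    have claimA : ∀ j : ℕ, (∀ i, g (x₀, ub + (j : ℝ) • dd) i ≤ 0) ∧
        f (x₀, ub + (j : ℝ) • dd) ≤ f (x₀, ub) := by
      intro j
      have hvt : Tendsto (fun k => u (φ k) + (j : ℝ) • d (φ k)) atTop
          (nhds (ub + (j : ℝ) • dd)) := hu_t.add (hd_t.const_smul _)
      have hpt : Tendsto (fun k => ((x (φ k)), u (φ k) + (j : ℝ) • d (φ k))) atTop
          (nhds (x₀, ub + (j : ℝ) • dd)) := hx_t.prodMk_nhds hvt
      have hev : ∀ᶠ k in atTop, (j : ℝ) ≤ L (φ k) := by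
        filter_upwards [eventually_ge_atTop j] with k hk
        have hkφ : j ≤ φ k := hk.trans (hφ.id_le k)
        have : (j : ℝ) ≤ (φ k : ℝ) := Nat.cast_le.mpr hkφ
        linarith [hL (φ k)]
      constructor
      · intro i
        have hgt : Tendsto (fun k => g ((x (φ k)), u (φ k) + (j : ℝ) • d (φ k)) i) atTop
            (nhds (g (x₀, ub + (j : ℝ) • dd) i)) :=
          (((PiLp.continuous_apply 2 _ i).comp hg).tendsto _).comp hpt
        refine le_of_tendsto hgt ?_
        filter_upwards [hev] with k hk
        exact (key j (φ k) hk).1 i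
      · have hft : Tendsto (fun k => f ((x (φ k)), u (φ k) + (j : ℝ) • d (φ k))) atTop
            (nhds (f (x₀, ub + (j : ℝ) • dd))) := (hf.tendsto _).comp hpt
        have hft0 : Tendsto (fun k => f ((x (φ k)), u (φ k))) atTop (nhds (f (x₀, ub))) :=
          (hf.tendsto _).comp (hx_t.prodMk_nhds hu_t)
        refine le_of_tendsto_of_tendsto hft hft0 ?_
        filter_upwards [hev] with k hk
        exact (key j (φ k) hk).2
    set u₀ := ustar x₀ with hu₀def
    have hubfeas : ∀ i, g (x₀, ub) i ≤ 0 := by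
      have := (claimA 0).1
      simpa using this
    have hfub : f (x₀, u₀) ≤ f (x₀, ub) := (hmin x₀).2 ub hubfeas
    -- claim B: recession — ray from u₀ in direction dd is feasible with f ≤ f(u₀)
    have claimB : ∀ s : ℝ, 0 ≤ s →
        (∀ i, g (x₀, u₀ + s • dd) i ≤ 0) ∧ f (x₀, u₀ + s • dd) ≤ f (x₀, u₀) := by
      intro s hs
      set lam : ℕ → ℝ := fun j => s / ((j : ℝ) + 1) with hlamdef
      have hlam0 : ∀ j, 0 ≤ lam j := fun j => div_nonneg hs (by positivity)
      have hlamt : Tendsto lam atTop (nhds 0) := by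
        have h1 : Tendsto (fun j : ℕ => s * (1 / ((j : ℝ) + 1))) atTop (nhds (s * 0)) :=
          tendsto_const_nhds.mul tendsto_one_div_add_atTop_nhds_zero_nat
        simpa [hlamdef, div_eq_mul_inv, mul_comm] using h1
      set q : ℕ → EuclideanSpace ℝ (Fin m) := fun j => u₀ + s • dd + lam j • (ub - u₀)
        with hqdef
      have hq_t : Tendsto q atTop (nhds (u₀ + s • dd)) := by
        have h1 : Tendsto (fun j => lam j • (ub - u₀)) atTop
            (nhds ((0:ℝ) • (ub - u₀))) := hlamt.smul_const _
        have h2 : Tendsto (fun _ : ℕ => u₀ + s • dd) atTop (nhds (u₀ + s • dd)) :=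
          tendsto_const_nhds
        simpa using h2.add h1
      have hev : ∀ᶠ j : ℕ in atTop, lam j ≤ 1 := by
        filter_upwards [eventually_ge_atTop ⌈s⌉₊] with j hj
        have : s ≤ (j : ℝ) + 1 := le_trans (Nat.le_ceil s)
          (by linarith [Nat.cast_le (α := ℝ) |>.mpr hj])
        rw [hlamdef]
        exact div_le_one_of_le₀ this (by positivity)
      have hrep : ∀ j : ℕ, lam j ≤ 1 →
          q j = (1 - lam j) • u₀ + lam j • (ub + ((j + 1 : ℕ) : ℝ) • dd) ∧
          0 ≤ 1 - lam j := by
        intro j hj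
        constructor
        · have hls : lam j * ((j : ℝ) + 1) = s := by
            rw [hlamdef]
            field_simp
          rw [hqdef]
          simp only
          rw [← hls]
          module
        · linarith
      constructor
      · intro i
        have hgt : Tendsto (fun j => g (x₀, q j) i) atTop
            (nhds (g (x₀, u₀ + s • dd) i)) :=
          (((PiLp.continuous_apply 2 _ i).comp hg).tendsto _).comp (tendsto_const_nhds.prodMk_nhds hq_t)
        refine le_of_tendsto hgt ?_
        filter_upwards [hev] with j hj
        obtain ⟨hqe, h1l⟩ := hrep j hj
        have hc := (hgconv x₀ i).2 (mem_univ u₀) (mem_univ (ub + ((j + 1 : ℕ) : ℝ) • dd))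
          h1l (hlam0 j) (by ring)
        simp only [smul_eq_mul] at hc
        rw [hqe]
        have h1 := (hmin x₀).1 i
        have h2 := (claimA (j + 1)).1 i
        rw [hu₀def] at *
        nlinarith [hlam0 j]
      · have hft : Tendsto (fun j => f (x₀, q j)) atTop (nhds (f (x₀, u₀ + s • dd))) :=
          (hf.tendsto _).comp (tendsto_const_nhds.prodMk_nhds hq_t)
        have hgt2 : Tendsto (fun j => (1 - lam j) * f (x₀, u₀) + lam j * f (x₀, ub)) atTop
            (nhds ((1 - 0) * f (x₀, u₀) + 0 * f (x₀, ub))) := by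
          exact ((tendsto_const_nhds.sub hlamt).mul tendsto_const_nhds).add
            (hlamt.mul tendsto_const_nhds)
        have hlim : f (x₀, u₀ + s • dd) ≤ (1 - 0) * f (x₀, u₀) + 0 * f (x₀, ub) := by
          refine le_of_tendsto_of_tendsto hft hgt2 ?_
          filter_upwards [hev] with j hj
          obtain ⟨hqe, h1l⟩ := hrep j hj
          have hc := ((hstrict x₀).convexOn).2 (mem_univ u₀)
            (mem_univ (ub + ((j + 1 : ℕ) : ℝ) • dd)) h1l (hlam0 j) (by ring)
          simp only [smul_eq_mul] at hc
          have h2 := (claimA (j + 1)).2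
          rw [hqe]
          nlinarith [hlam0 j]
        linarith
    -- final contradiction via strict convexity
    have hd1 : ‖dd‖ = 1 := mem_sphere_zero_iff_norm.mp hmemP.2
    have hdne : dd ≠ 0 := by
      intro h0
      rw [h0, norm_zero] at hd1
      norm_num at hd1
    obtain ⟨hg1, hf1⟩ := claimB 1 zero_le_one
    obtain ⟨hg2, hf2⟩ := claimB 2 (by norm_num)
    have hne : u₀ ≠ u₀ + (2 : ℝ) • dd := by
      intro hEq
      apply hdne
      have h0 : (2 : ℝ) • dd = 0 := by
        have := hEq.symm
        rwa [add_eq_left] at this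
      simpa using (smul_eq_zero.mp h0).resolve_left (by norm_num)
    have hsc := (hstrict x₀).2 (mem_univ u₀) (mem_univ (u₀ + (2 : ℝ) • dd)) hne
      (by norm_num : (0:ℝ) < 1/2) (by norm_num : (0:ℝ) < 1/2) (by norm_num)
    simp only [smul_eq_mul] at hsc
    have hmid : (1/2 : ℝ) • u₀ + (1/2 : ℝ) • (u₀ + (2 : ℝ) • dd) = u₀ + (1 : ℝ) • dd := by
      module
    rw [hmid] at hsc
    have hmin1 : f (x₀, u₀) ≤ f (x₀, u₀ + (1 : ℝ) • dd) := (hmin x₀).2 _ hg1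
    linarith
end

section
/- Let f : ℝ^n × ℝ^m → ℝ and g : ℝ^n × ℝ^m → ℝ^p be continuous. Assume that for every x ∈ ℝ^n the function u ↦ f(x,u) is strictly convex, each component u ↦ g_i(x,u) is convex, the problem P(x) has a minimizer (hence a unique minimizer u*(x)), and local compact feasibility holds at x. Then the map u* : ℝ^n → ℝ^m is (Borel) measurable. -/
open Set Filter Topology



/-- Key pointwise lemma: near-minimizers of the increasingly-penalized objective
converge to the unique constrained minimizer. -/
lemma lemmaM {m : ℕ} (f pen : EuclideanSpace ℝ (Fin m) → ℝ)
    (hf : Continuous f) (hpen : Continuous pen)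
    (hfc : StrictConvexOn ℝ univ f) (hpc : ConvexOn ℝ univ pen)
    (hpen0 : ∀ u, 0 ≤ pen u)
    (w : EuclideanSpace ℝ (Fin m)) (hfeas : pen w = 0)
    (hopt : ∀ u, pen u = 0 → f w ≤ f u)
    (v : ℕ → EuclideanSpace ℝ (Fin m)) (c : ℕ → ℝ) (L : ℝ)
    (hc : Tendsto c atTop (𝓝 L)) (hLV : L ≤ f w)
    (hv : ∀ k : ℕ, f (v k) + (k + 1) * pen (v k) ≤ c k) :
    L = f w ∧ Tendsto v atTop (𝓝 w) := by
  -- strict minimality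
  have hsm : ∀ u, pen u = 0 → u ≠ w → f w < f u := by
    intro u hu hne
    rcases lt_or_ge (f w) (f u) with h | h
    · exact h
    exfalso
    have hfu : f u = f w := le_antisymm h (hopt u hu)
    have hz : pen ((1/2 : ℝ) • u + (1/2 : ℝ) • w) = 0 := by
      have := hpc.2 (mem_univ u) (mem_univ w) (by norm_num : (0:ℝ) ≤ 1/2)
        (by norm_num : (0:ℝ) ≤ 1/2) (by norm_num)
      have h0 := hpen0 ((1/2 : ℝ) • u + (1/2 : ℝ) • w)
      rw [hu, hfeas] at this
      simp only [smul_zero, add_zero] at this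
      linarith
    have hlt := hfc.2 (mem_univ u) (mem_univ w) hne (by norm_num : (0:ℝ) < 1/2)
      (by norm_num : (0:ℝ) < 1/2) (by norm_num)
    have := hopt _ hz
    simp only [smul_eq_mul] at hlt
    rw [hfu] at hlt
    linarith
  -- convexity of penalized objectives
  have hconv : ∀ k : ℕ, ConvexOn ℝ univ (fun u => f u + ((k:ℝ) + 1) * pen u) := by
    intro k
    have := hfc.convexOn.add (hpc.smul (by positivity : (0:ℝ) ≤ (k:ℝ) + 1))
    exact this
  -- Step 2: sphere bound
  obtain ⟨K, ε, hε, hK⟩ : ∃ (K : ℕ) (ε : ℝ), 0 < ε ∧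
      ∀ u, ‖u - w‖ = 1 → f w + ε ≤ f u + ((K:ℝ) + 1) * pen u := by
    by_cases hS : (Metric.sphere w 1).Nonempty
    · set U : ℕ → Set (EuclideanSpace ℝ (Fin m)) :=
        fun k => {u | f w < f u + ((k:ℝ) + 1) * pen u} with hU
      have hUopen : ∀ k, IsOpen (U k) :=
        fun k => isOpen_lt continuous_const (hf.add (continuous_const.mul hpen))
      have hUmono : ∀ j k : ℕ, j ≤ k → U j ⊆ U k := by
        intro j k hjk u hu
        have : ((j:ℝ) + 1) * pen u ≤ ((k:ℝ) + 1) * pen u := by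
          have : (j:ℝ) ≤ (k:ℝ) := by exact_mod_cast hjk
          nlinarith [hpen0 u]
        simp only [hU, mem_setOf_eq] at hu ⊢
        linarith
      have hcover : Metric.sphere w 1 ⊆ ⋃ k, U k := by
        intro u hu
        have hne : u ≠ w := by
          intro h
          rw [mem_sphere_iff_norm] at hu
          rw [h] at hu
          simp at hu
        rcases eq_or_lt_of_le (hpen0 u) with hp0 | hp0
        · have : f w < f u := hsm u hp0.symm hne
          exact mem_iUnion.2 ⟨0, by simp only [hU, mem_setOf_eq]; rw [← hp0]; simpa using this⟩
        · obtain ⟨k, hk⟩ := exists_nat_gt ((f w - f u) / pen u)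
          refine mem_iUnion.2 ⟨k, ?_⟩
          simp only [hU, mem_setOf_eq]
          rw [div_lt_iff₀ hp0] at hk
          nlinarith
      obtain ⟨t, ht⟩ := (isCompact_sphere w 1).elim_finite_subcover U hUopen hcover
      set K := t.sup id with hKdef
      have hSK : Metric.sphere w 1 ⊆ U K := by
        intro u hu
        obtain ⟨k, hkt, hk⟩ := by simpa using ht hu
        exact hUmono k K (Finset.le_sup (f := id) hkt) hk
      obtain ⟨u₀, hu₀S, hu₀min⟩ := (isCompact_sphere w 1).exists_isMinOn hS
        ((hf.add (continuous_const.mul hpen)).continuousOn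
          (s := Metric.sphere w 1) (f := fun u => f u + ((K:ℝ) + 1) * pen u))
      refine ⟨K, f u₀ + ((K:ℝ) + 1) * pen u₀ - f w, by
        have := hSK hu₀S
        simp only [hU, mem_setOf_eq] at this
        linarith, ?_⟩
      intro u hu
      have huS : u ∈ Metric.sphere w 1 := by rwa [mem_sphere_iff_norm]
      have := hu₀min huS
      simp only [mem_setOf_eq] at this
      linarith [this]
    · exact ⟨0, 1, one_pos, fun u hu =>
        absurd ⟨u, by rwa [mem_sphere_iff_norm]⟩ hS⟩
  -- Step 3: coercivity
  have hcoer : ∀ u, 1 ≤ ‖u - w‖ →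
      f w + ε * ‖u - w‖ ≤ f u + ((K:ℝ) + 1) * pen u := by
    intro u hR
    set R := ‖u - w‖ with hRdef
    have hR0 : (0:ℝ) < R := lt_of_lt_of_le one_pos hR
    set u' := w + R⁻¹ • (u - w) with hu'def
    have hu' : ‖u' - w‖ = 1 := by
      simp only [hu'def, add_sub_cancel_left, norm_smul, Real.norm_eq_abs,
        abs_of_pos (inv_pos.2 hR0)]
      rw [← hRdef, inv_mul_cancel₀ hR0.ne']
    have hcomb : u' = (1 - R⁻¹) • w + R⁻¹ • u := by
      rw [hu'def]; module
    have h1 : f u' + ((K:ℝ) + 1) * pen u' ≤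
        (1 - R⁻¹) * (f w + ((K:ℝ) + 1) * pen w) + R⁻¹ * (f u + ((K:ℝ) + 1) * pen u) := by
      have := (hconv K).2 (mem_univ w) (mem_univ u)
        (by
          have : R⁻¹ ≤ 1 := by
            rw [inv_le_one_iff₀]; right; exact hR
          linarith : (0:ℝ) ≤ 1 - R⁻¹)
        (inv_pos.2 hR0).le (by ring)
      rw [hcomb]
      exact this
    have h2 := hK u' hu'
    rw [hfeas] at h1
    have hinv : R⁻¹ * R = 1 := inv_mul_cancel₀ hR0.ne'
    set T := f u + ((K:ℝ) + 1) * pen u with hT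
    have h3 : f w + ε ≤ (1 - R⁻¹) * f w + R⁻¹ * T := by
      have := h2.trans h1
      linarith [this]
    -- multiply by R
    have h4 := mul_le_mul_of_nonneg_right h3 hR0.le
    have h5 : ((1 - R⁻¹) * f w + R⁻¹ * T) * R = f w * R - f w + T := by
      field_simp
    rw [h5] at h4
    nlinarith [h4]
  -- Step 4: boundedness
  obtain ⟨B, hB⟩ : ∃ B, ∀ k, c k ≤ B := by
    obtain ⟨B, hB⟩ := hc.bddAbove_range
    exact ⟨B, fun k => hB (mem_range_self k)⟩
  set C : ℝ := max 1 ((B - f w) / ε) with hCdef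
  have hC1 : (1:ℝ) ≤ C := le_max_left _ _
  have hbound : ∀ k, K ≤ k → ‖v k - w‖ ≤ C := by
    intro k hk
    by_cases h1 : ‖v k - w‖ ≤ 1
    · exact h1.trans hC1
    push_neg at h1
    have h2 := hcoer (v k) h1.le
    have h3 : f (v k) + ((K:ℝ) + 1) * pen (v k) ≤ f (v k) + ((k:ℝ) + 1) * pen (v k) := by
      have : (K:ℝ) ≤ (k:ℝ) := by exact_mod_cast hk
      nlinarith [hpen0 (v k)]
    have h4 : f w + ε * ‖v k - w‖ ≤ B := by
      calc f w + ε * ‖v k - w‖ ≤ f (v k) + ((K:ℝ) + 1) * pen (v k) := h2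
        _ ≤ f (v k) + ((k:ℝ) + 1) * pen (v k) := h3
        _ ≤ c k := hv k
        _ ≤ B := hB k
    have : ‖v k - w‖ ≤ (B - f w) / ε := by
      rw [le_div_iff₀ hε]
      nlinarith
    exact this.trans (le_max_right _ _)
  set D := Metric.closedBall w C with hDdef
  have hDcpt : IsCompact D := isCompact_closedBall w C
  have hmemD : ∀ k, K ≤ k → v k ∈ D := by
    intro k hk
    rw [hDdef, Metric.mem_closedBall, dist_eq_norm]
    exact hbound k hk
  -- lower bound for f on D
  obtain ⟨u₁, hu₁D, hu₁min⟩ := hDcpt.exists_isMinOn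
    ⟨w, Metric.mem_closedBall_self (by linarith)⟩ hf.continuousOn
  set lb := f u₁ with hlb
  -- Step 6: every subsequence has a further subsequence converging to a feasible
  -- point with value ≤ L
  have key : ∀ ns : ℕ → ℕ, Tendsto ns atTop atTop →
      ∃ (q : EuclideanSpace ℝ (Fin m)) (ms : ℕ → ℕ),
        Tendsto (fun i => v (ns (ms i))) atTop (𝓝 q) ∧ pen q = 0 ∧ f q ≤ L := by
    intro ns hns
    obtain ⟨N, hN⟩ := (hns.eventually_ge_atTop K).exists_forall_of_atTop
    obtain ⟨q, hqD, ms, hms, hlim⟩ := hDcpt.tendsto_subseq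
      (x := fun i => v (ns (i + N))) (fun i => hmemD _ (hN _ (Nat.le_add_left N i)))
    have hidx : Tendsto (fun i => ns (ms i + N)) atTop atTop :=
      hns.comp ((tendsto_add_atTop_nat N).comp hms.tendsto_atTop)
    refine ⟨q, fun i => ms i + N, hlim, ?_, ?_⟩
    · -- pen q = 0
      have hp1 : Tendsto (fun i => pen (v (ns (ms i + N)))) atTop (𝓝 (pen q)) :=
        (hpen.continuousAt.tendsto).comp hlim
      have hp2 : Tendsto (fun i => pen (v (ns (ms i + N)))) atTop (𝓝 0) := by
        have hub : ∀ i, pen (v (ns (ms i + N))) ≤ (B - lb) / ((ns (ms i + N) : ℝ) + 1) := by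
          intro i
          set k := ns (ms i + N) with hk
          have hkK : K ≤ k := hN _ (Nat.le_add_left N (ms i))
          have hfv : lb ≤ f (v k) := hu₁min (hmemD k hkK)
          have := hv k
          have hpos : (0:ℝ) < (k:ℝ) + 1 := by positivity
          rw [le_div_iff₀ hpos]
          have := hB k
          nlinarith [hv k, hB k]
        have htail : Tendsto (fun i => (B - lb) / ((ns (ms i + N) : ℝ) + 1)) atTop (𝓝 0) := by
          apply Tendsto.div_atTop tendsto_const_nhds
          have : Tendsto (fun i => ((ns (ms i + N) : ℝ))) atTop atTop :=
            tendsto_natCast_atTop_atTop.comp hidx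
          exact tendsto_atTop_add_const_right _ 1 this
        exact tendsto_of_tendsto_of_tendsto_of_le_of_le tendsto_const_nhds htail
          (fun i => hpen0 _) hub
      exact tendsto_nhds_unique hp1 hp2
    · -- f q ≤ L
      have hf1 : Tendsto (fun i => f (v (ns (ms i + N)))) atTop (𝓝 (f q)) :=
        (hf.continuousAt.tendsto).comp hlim
      have hf2 : ∀ i, f (v (ns (ms i + N))) ≤ c (ns (ms i + N)) := by
        intro i
        have := hv (ns (ms i + N))
        nlinarith [hpen0 (v (ns (ms i + N)))]
      have hc2 : Tendsto (fun i => c (ns (ms i + N))) atTop (𝓝 L) := hc.comp hidx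
      exact le_of_tendsto_of_tendsto hf1 hc2 (Eventually.of_forall hf2)
  obtain ⟨q, ms, hlim, hq0, hqL⟩ := key id tendsto_id
  have hfq : f q = f w := le_antisymm (hqL.trans hLV) (hopt q hq0)
  have hLw : L = f w := le_antisymm hLV (hfq ▸ hqL)
  have hqw : ∀ q', pen q' = 0 → f q' ≤ L → q' = w := by
    intro q' h0 hL'
    by_contra hne
    exact absurd (le_antisymm (hL'.trans hLV) (hopt q' h0)) (ne_of_gt (hsm q' h0 hne))
  refine ⟨hLw, tendsto_of_subseq_tendsto fun ns hns => ?_⟩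
  obtain ⟨q', ms, hlim', hq0', hqL'⟩ := key ns hns
  exact ⟨ms, (hqw q' hq0' hqL') ▸ hlim'⟩

noncomputable section StmtAux

variable {n m p : ℕ}

/-- The penalty function: sum of positive parts of the constraints. -/
def stmtPen (g : EuclideanSpace ℝ (Fin n) × EuclideanSpace ℝ (Fin m) → EuclideanSpace ℝ (Fin p))
    (z : EuclideanSpace ℝ (Fin n) × EuclideanSpace ℝ (Fin m)) : ℝ :=
  ∑ i, max (g z i) 0

/-- The `k`-th penalized objective. -/
def stmtF (f : EuclideanSpace ℝ (Fin n) × EuclideanSpace ℝ (Fin m) → ℝ)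
    (g : EuclideanSpace ℝ (Fin n) × EuclideanSpace ℝ (Fin m) → EuclideanSpace ℝ (Fin p))
    (k : ℕ) (z : EuclideanSpace ℝ (Fin n) × EuclideanSpace ℝ (Fin m)) : ℝ :=
  f z + ((k : ℝ) + 1) * stmtPen g z

/-- A dense sequence in `ℝ^m`. -/
def stmtSeq (m : ℕ) : ℕ → EuclideanSpace ℝ (Fin m) :=
  TopologicalSpace.denseSeq _

lemma stmtSeq_dense (m : ℕ) : DenseRange (stmtSeq m) :=
  TopologicalSpace.denseRange_denseSeq _

/-- The infimum of the `k`-th penalized objective over the dense sequence. -/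
def stmtW (f : EuclideanSpace ℝ (Fin n) × EuclideanSpace ℝ (Fin m) → ℝ)
    (g : EuclideanSpace ℝ (Fin n) × EuclideanSpace ℝ (Fin m) → EuclideanSpace ℝ (Fin p))
    (k : ℕ) (x : EuclideanSpace ℝ (Fin n)) : EReal :=
  ⨅ i : ℕ, ((stmtF f g k (x, stmtSeq m i) : ℝ) : EReal)

/-- The predicate: the `i`-th point of the dense sequence is a `1/(k+1)`-near
minimizer of the `k`-th penalized objective. -/
def stmtP (f : EuclideanSpace ℝ (Fin n) × EuclideanSpace ℝ (Fin m) → ℝ)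
    (g : EuclideanSpace ℝ (Fin n) × EuclideanSpace ℝ (Fin m) → EuclideanSpace ℝ (Fin p))
    (k : ℕ) (x : EuclideanSpace ℝ (Fin n)) (i : ℕ) : Prop :=
  ((stmtF f g k (x, stmtSeq m i) - 1 / ((k : ℝ) + 1) : ℝ) : EReal) < stmtW f g k x

open Classical in
/-- Index of the first near-minimizer in the dense sequence (or `0`). -/
def stmtN (f : EuclideanSpace ℝ (Fin n) × EuclideanSpace ℝ (Fin m) → ℝ)
    (g : EuclideanSpace ℝ (Fin n) × EuclideanSpace ℝ (Fin m) → EuclideanSpace ℝ (Fin p))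
    (k : ℕ) (x : EuclideanSpace ℝ (Fin n)) : ℕ :=
  if h : ∃ i, stmtP f g k x i then Nat.find h else 0

open Classical in
lemma stmtN_spec {f : EuclideanSpace ℝ (Fin n) × EuclideanSpace ℝ (Fin m) → ℝ}
    {g : EuclideanSpace ℝ (Fin n) × EuclideanSpace ℝ (Fin m) → EuclideanSpace ℝ (Fin p)}
    {k : ℕ} {x : EuclideanSpace ℝ (Fin n)} (h : ∃ i, stmtP f g k x i) :
    stmtP f g k x (stmtN f g k x) := by
  rw [stmtN, dif_pos h]
  exact Nat.find_spec h

open Classical in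
lemma stmtN_eq_iff {f : EuclideanSpace ℝ (Fin n) × EuclideanSpace ℝ (Fin m) → ℝ}
    {g : EuclideanSpace ℝ (Fin n) × EuclideanSpace ℝ (Fin m) → EuclideanSpace ℝ (Fin p)}
    {k : ℕ} {x : EuclideanSpace ℝ (Fin n)} (j : ℕ) :
    stmtN f g k x = j ↔
      (stmtP f g k x j ∧ ∀ i < j, ¬ stmtP f g k x i) ∨
        (j = 0 ∧ ∀ i, ¬ stmtP f g k x i) := by
  rw [stmtN]
  by_cases h : ∃ i, stmtP f g k x i
  · rw [dif_pos h, Nat.find_eq_iff h]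
    constructor
    · rintro ⟨h1, h2⟩; exact Or.inl ⟨h1, h2⟩
    · rintro (⟨h1, h2⟩ | ⟨rfl, h2⟩)
      · exact ⟨h1, h2⟩
      · exact absurd h (by simpa using h2)
  · rw [dif_neg h]
    push_neg at h
    constructor
    · rintro rfl; exact Or.inr ⟨rfl, h⟩
    · rintro (⟨h1, _⟩ | ⟨rfl, _⟩)
      · exact absurd h1 (h _)
      · rfl

end StmtAux

/-- For continuous problem data with `f(x,·)` strictly convex, each
`g_i(x,·)` convex, a (unique) minimizer `u*(x)` of `P(x)` for every `x`, and local
compact feasibility holding at every `x`, the map `u*` is Borel measurable. -/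
theorem stmt_5 {n m p : ℕ}
    (f : EuclideanSpace ℝ (Fin n) × EuclideanSpace ℝ (Fin m) → ℝ)
    (g : EuclideanSpace ℝ (Fin n) × EuclideanSpace ℝ (Fin m) → EuclideanSpace ℝ (Fin p))
    (ustar : EuclideanSpace ℝ (Fin n) → EuclideanSpace ℝ (Fin m))
    (hf : Continuous f) (hg : Continuous g)
    (hstrict : ∀ x, StrictConvexOn ℝ univ fun u => f (x, u))
    (hgconv : ∀ x (i : Fin p), ConvexOn ℝ univ fun u => g (x, u) i)
    (hmin : ∀ x, (∀ i, g (x, ustar x) i ≤ 0) ∧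
      ∀ u, (∀ i, g (x, u) i ≤ 0) → f (x, ustar x) ≤ f (x, u))
    (hLCF : ∀ x : EuclideanSpace ℝ (Fin n),
      ∃ K : Set (EuclideanSpace ℝ (Fin m)), IsCompact K ∧ ∃ δ : ℝ, 0 < δ ∧
        ∀ y : EuclideanSpace ℝ (Fin n), ‖y - x‖ < δ → ∃ u ∈ K, ∀ i, g (y, u) i ≤ 0) :
    Measurable ustar := by
  -- continuity of penalty and penalized objectives
  have hPen_cont : Continuous (stmtPen g) := by
    apply continuous_finset_sum
    intro i _
    exact ((EuclideanSpace.proj i).continuous.comp hg).max continuous_const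
  have hF_cont : ∀ k : ℕ, Continuous (stmtF f g k) := fun k =>
    hf.add (continuous_const.mul hPen_cont)
  -- measurability of the selections
  have hW_meas : ∀ k, Measurable (stmtW f g k) := by
    intro k
    apply Measurable.iInf
    intro i
    exact measurable_coe_real_ereal.comp
      (((hF_cont k).comp (continuous_id.prodMk continuous_const)).measurable)
  have hP_meas : ∀ k i, MeasurableSet {x | stmtP f g k x i} := by
    intro k i
    have : {x | stmtP f g k x i} =
        {x : EuclideanSpace ℝ (Fin n) |
          ((stmtF f g k (x, stmtSeq m i) - 1 / ((k : ℝ) + 1) : ℝ) : EReal) < stmtW f g k x} :=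
      rfl
    rw [this]
    exact measurableSet_lt
      (measurable_coe_real_ereal.comp
        ((((hF_cont k).comp (continuous_id.prodMk continuous_const)).sub
          continuous_const).measurable))
      (hW_meas k)
  have hN_meas : ∀ k, Measurable (stmtN f g k) := by
    intro k
    apply measurable_to_countable'
    intro j
    have heq : stmtN f g k ⁻¹' {j} =
        (({x | stmtP f g k x j} ∩ ⋂ i, ⋂ _ : i < j, {x | stmtP f g k x i}ᶜ) ∪
          if j = 0 then ⋂ i, {x | stmtP f g k x i}ᶜ else ∅) := by
      ext x
      simp only [mem_preimage, mem_singleton_iff, stmtN_eq_iff, mem_union, mem_inter_iff,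
        mem_iInter, mem_compl_iff, mem_setOf_eq]
      by_cases hj : j = 0 <;> simp [hj] <;> tauto
    rw [heq]
    apply MeasurableSet.union
    · exact (hP_meas k j).inter
        (MeasurableSet.iInter fun i => MeasurableSet.iInter fun _ => (hP_meas k i).compl)
    · split_ifs
      · exact MeasurableSet.iInter fun i => (hP_meas k i).compl
      · exact MeasurableSet.empty
  have hsel_meas : ∀ k : ℕ,
      Measurable fun x => stmtSeq m (stmtN f g k x) := fun k =>
    (measurable_from_top (f := stmtSeq m)).comp (hN_meas k)
  -- pointwise convergence of the selections to `ustar`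
  have hconv : ∀ x, Tendsto (fun k => stmtSeq m (stmtN f g k x)) atTop (𝓝 (ustar x)) := by
    intro x
    have hffc : Continuous fun u => f (x, u) := hf.comp (Continuous.prodMk_right x)
    have hppc : Continuous fun u => stmtPen g (x, u) := hPen_cont.comp (Continuous.prodMk_right x)
    have hpp0 : ∀ u, 0 ≤ stmtPen g (x, u) := fun u =>
      Finset.sum_nonneg fun i _ => le_max_right _ _
    have hpp_zero : ∀ u, stmtPen g (x, u) = 0 ↔ ∀ i, g (x, u) i ≤ 0 := by
      intro u
      constructor
      · intro h i
        have h2 := (Finset.sum_eq_zero_iff_of_nonneg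
          (fun i _ => le_max_right (g (x, u) i) 0)).1 h i (Finset.mem_univ i)
        linarith [le_max_left (g (x, u) i) 0]
      · intro h
        apply Finset.sum_eq_zero
        intro i _
        exact max_eq_right (h i)
    have hfeas : stmtPen g (x, ustar x) = 0 := (hpp_zero _).2 (hmin x).1
    have hopt : ∀ u, stmtPen g (x, u) = 0 → f (x, ustar x) ≤ f (x, u) := fun u h =>
      (hmin x).2 u ((hpp_zero u).1 h)
    have hppconv : ConvexOn ℝ univ fun u => stmtPen g (x, u) := by
      have hterm : ∀ i : Fin p, ConvexOn ℝ univ fun u => max (g (x, u) i) 0 := by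
        intro i
        have := (hgconv x i).sup (convexOn_const (0 : ℝ) convex_univ)
        exact this
      classical
      have hsum : ∀ s : Finset (Fin p),
          ConvexOn ℝ univ fun u => ∑ i ∈ s, max (g (x, u) i) 0 := by
        intro s
        induction s using Finset.cons_induction with
        | empty => simpa using convexOn_const (0 : ℝ) convex_univ
        | cons a s ha ih =>
          have h2 := (hterm a).add ih
          simp only [Finset.sum_cons]
          exact h2
      exact hsum Finset.univ
    set V := f (x, ustar x) with hV
    have hFstar : ∀ k : ℕ, stmtF f g k (x, ustar x) = V := by
      intro k
      rw [stmtF, hfeas]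
      ring
    have hWleV : ∀ k, stmtW f g k x ≤ ((V : ℝ) : EReal) := by
      intro k
      by_contra hlt
      push_neg at hlt
      obtain ⟨r, hVr, hrW⟩ := EReal.lt_iff_exists_real_btwn.1 hlt
      have hVr' : V < r := by exact_mod_cast hVr
      have hopen : IsOpen {u : EuclideanSpace ℝ (Fin m) | stmtF f g k (x, u) < r} :=
        isOpen_lt ((hF_cont k).comp (Continuous.prodMk_right x)) continuous_const
      have hmem : ustar x ∈ {u : EuclideanSpace ℝ (Fin m) | stmtF f g k (x, u) < r} := by
        show stmtF f g k (x, ustar x) < r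
        rw [hFstar k]; exact hVr'
      obtain ⟨i, hi⟩ := (stmtSeq_dense m).exists_mem_open hopen ⟨_, hmem⟩
      have h1 : stmtW f g k x ≤ ((stmtF f g k (x, stmtSeq m i) : ℝ) : EReal) := iInf_le _ i
      have h2 : stmtW f g k x < (r : EReal) :=
        lt_of_le_of_lt h1 (by exact_mod_cast hi)
      exact absurd hrW (not_lt.2 h2.le)
    have hWmono : Monotone fun k => stmtW f g k x := by
      intro j k hjk
      apply iInf_mono
      intro i
      apply EReal.coe_le_coe_iff.2
      rw [stmtF, stmtF]
      have hc : ((j : ℝ)) ≤ (k : ℝ) := by exact_mod_cast hjk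
      nlinarith [hpp0 (stmtSeq m i)]
    have hnotbot : ∃ k0, stmtW f g k0 x ≠ ⊥ := by
      by_contra hall
      push_neg at hall
      have hch : ∀ k : ℕ, ∃ i, stmtF f g k (x, stmtSeq m i) < V - 1 := by
        intro k
        have h1 := iInf_eq_bot.1 (hall k) (((V - 1 : ℝ)) : EReal) (EReal.bot_lt_coe _)
        obtain ⟨i, hi⟩ := h1
        exact ⟨i, by exact_mod_cast hi⟩
      choose idx hidx using hch
      have hlem := lemmaM (fun u => f (x, u)) (fun u => stmtPen g (x, u)) hffc hppc
        (hstrict x) hppconv hpp0 (ustar x) hfeas hopt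
        (fun k => stmtSeq m (idx k)) (fun _ => V - 1) (V - 1) tendsto_const_nhds
        (by linarith) (fun k => (hidx k).le)
      linarith [hlem.1]
    obtain ⟨k0, hk0⟩ := hnotbot
    have hne_bot : ∀ k, k0 ≤ k → stmtW f g k x ≠ ⊥ := by
      intro k hk hbot
      exact hk0 (le_bot_iff.1 (hbot ▸ hWmono hk))
    have hexP : ∀ k, k0 ≤ k → ∃ i, stmtP f g k x i := by
      intro k hk
      have hne_top : stmtW f g k x ≠ ⊤ := by
        intro htop
        have := hWleV k
        rw [htop] at this
        exact (EReal.coe_ne_top V) (top_le_iff.1 this)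
      set r := (stmtW f g k x).toReal with hr
      have hrW : ((r : ℝ) : EReal) = stmtW f g k x := EReal.coe_toReal hne_top (hne_bot k hk)
      have hdpos : (0 : ℝ) < 1 / ((k : ℝ) + 1) := by positivity
      have hlt : stmtW f g k x < ((r + 1 / ((k : ℝ) + 1) : ℝ) : EReal) := by
        rw [← hrW]
        exact_mod_cast (by linarith : r < r + 1 / ((k : ℝ) + 1))
      rw [stmtW] at hlt
      obtain ⟨i, hi⟩ := iInf_lt_iff.1 hlt
      refine ⟨i, ?_⟩
      rw [stmtP, ← hrW]
      have h2 : stmtF f g k (x, stmtSeq m i) < r + 1 / ((k : ℝ) + 1) := by exact_mod_cast hi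
      exact_mod_cast (by linarith : stmtF f g k (x, stmtSeq m i) - 1 / ((k : ℝ) + 1) < r)
    have hselb : ∀ k, k0 ≤ k →
        f (x, stmtSeq m (stmtN f g k x)) +
          ((k : ℝ) + 1) * stmtPen g (x, stmtSeq m (stmtN f g k x)) ≤ V + 1 / ((k : ℝ) + 1) := by
      intro k hk
      have hP := stmtN_spec (hexP k hk)
      rw [stmtP] at hP
      have h1 := lt_of_lt_of_le hP (hWleV k)
      have h2 : stmtF f g k (x, stmtSeq m (stmtN f g k x)) - 1 / ((k : ℝ) + 1) < V := by
        exact_mod_cast h1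
      rw [stmtF] at h2
      linarith
    have h0t : Tendsto (fun j : ℕ => 1 / (((j + k0 : ℕ) : ℝ) + 1)) atTop (𝓝 0) :=
      tendsto_one_div_add_atTop_nhds_zero_nat.comp (tendsto_add_atTop_nat k0)
    have hcc : Tendsto (fun j : ℕ => V + 1 / (((j + k0 : ℕ) : ℝ) + 1)) atTop (𝓝 V) := by
      have h := Tendsto.const_add V h0t
      simpa using h
    have hmain := lemmaM (fun u => f (x, u)) (fun u => stmtPen g (x, u)) hffc hppc
      (hstrict x) hppconv hpp0 (ustar x) hfeas hopt
      (fun j => stmtSeq m (stmtN f g (j + k0) x))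
      (fun j => V + 1 / (((j + k0 : ℕ) : ℝ) + 1)) V hcc le_rfl
      (fun j => by
        have h1 := hselb (j + k0) (Nat.le_add_left k0 j)
        have h2 : ((j : ℝ) + 1) * stmtPen g (x, stmtSeq m (stmtN f g (j + k0) x)) ≤
            (((j + k0 : ℕ) : ℝ) + 1) * stmtPen g (x, stmtSeq m (stmtN f g (j + k0) x)) := by
          have hc : ((j : ℝ)) ≤ ((j + k0 : ℕ) : ℝ) := by exact_mod_cast Nat.le_add_right j k0
          nlinarith [hpp0 (stmtSeq m (stmtN f g (j + k0) x))]
        linarith)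
    exact (tendsto_add_atTop_iff_nat k0).1 hmain.2
  exact measurable_of_tendsto_metrizable hsel_meas (tendsto_pi_nhds.2 hconv)
end

section
/- Let f : ℝ^n × ℝ^m → ℝ and g : ℝ^n × ℝ^m → ℝ^p be continuous, such that for every x the maps u ↦ f(x,u) and u ↦ g(x,u) are twice continuously differentiable and the partial derivatives in u up to order two of f and g are continuous jointly in (x,u). Assume that for every x ∈ ℝ^n the function u ↦ f(x,u) is strictly convex, each component u ↦ g_i(x,u) is convex, and the problem P(x) has a minimizer (hence a unique minimizer u*(x)). Suppose Slater's condition holds at x₀ ∈ ℝ^n, and let F : ℝ^n × ℝ^m → ℝ^n be locally Lipschitz. Then there exists δ₀ > 0 and a differentiable curve x : (−δ₀, δ₀) → ℝ^n with x(0) = x₀ such that x'(t) = F(x(t), u*(x(t))) for all t ∈ (−δ₀, δ₀). -/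
open Set Filter Metric Topology intervalIntegral

set_option linter.unusedSectionVars false
set_option linter.unusedVariables false
set_option maxHeartbeats 1000000

noncomputable section
namespace Stmt6Aux

variable {E : Type*} [NormedAddCommGroup E] [NormedSpace ℝ E] [CompleteSpace E]

/-- delay map -/
def sig (h s : ℝ) : ℝ := max (s - h) 0 + min (s + h) 0

lemma sig_cont (h : ℝ) : Continuous (sig h) := by
  unfold sig; fun_prop

lemma abs_sig_le (h : ℝ) (hh : 0 ≤ h) (s : ℝ) : |sig h s| ≤ |s| := by
  unfold sig
  rcases le_total 0 s with hs | hs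
  · rw [min_eq_right (by linarith), add_zero]
    rw [abs_of_nonneg (le_max_right _ _), abs_of_nonneg hs]
    exact max_le (by linarith) hs
  · rw [max_eq_right (by linarith), zero_add]
    rw [abs_of_nonpos (min_le_right _ _), abs_of_nonpos hs]
    simp only [neg_le_neg_iff]
    exact le_min (by linarith) hs

lemma abs_sig_sub_le (h : ℝ) (hh : 0 ≤ h) (s : ℝ) : |sig h s - s| ≤ h := by
  unfold sig
  rcases le_total 0 s with hs | hs
  · rw [min_eq_right (by linarith), add_zero]
    rw [abs_le]; constructor
    · have := le_max_left (s - h) 0; linarith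
    · rcases le_total (s - h) 0 with h1 | h1
      · rw [max_eq_right h1]; linarith
      · rw [max_eq_left h1]; linarith
  · rw [max_eq_right (by linarith), zero_add]
    rw [abs_le]; constructor
    · rcases le_total (s + h) 0 with h1 | h1
      · rw [min_eq_left h1]; linarith
      · rw [min_eq_right h1]; linarith
    · have := min_le_left (s + h) 0; linarith

lemma abs_sig_le_of (h a : ℝ) (hh : 0 ≤ h) (ha : 0 ≤ a) (s : ℝ) (hs : |s| ≤ a + h) :
    |sig h s| ≤ a := by
  unfold sig
  rcases le_total 0 s with hs' | hs'
  · rw [abs_of_nonneg hs'] at hs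
    rw [min_eq_right (by linarith), add_zero,
      abs_of_nonneg (le_max_right _ _)]
    exact max_le (by linarith) ha
  · rw [abs_of_nonpos hs'] at hs
    rw [max_eq_right (by linarith), zero_add, abs_of_nonpos (min_le_right _ _)]
    simp only [neg_le]
    exact le_min (by linarith) (by linarith)

lemma primitive_hasDerivAt {f : ℝ → E} (hf : Continuous f) (a b : ℝ) :
    HasDerivAt (fun t => ∫ s in a..t, f s) (f b) b :=
  integral_hasDerivAt_right (hf.intervalIntegrable _ _)
    hf.aestronglyMeasurable.stronglyMeasurableAtFilter hf.continuousAt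

lemma abs_le_of_mem_uIcc {s c : ℝ} (hs : s ∈ Set.uIcc 0 c) : |s| ≤ |c| := by
  rcases hs with ⟨h1, h2⟩
  rcases le_total 0 c with hc | hc
  · simp only [min_eq_left hc, max_eq_right hc] at h1 h2 -- min 0 c = 0
    rw [abs_of_nonneg h1, abs_of_nonneg hc]; exact h2
  · simp only [min_eq_right hc, max_eq_left hc] at h1 h2
    rw [abs_of_nonpos h2, abs_of_nonpos hc]; exact neg_le_neg h1


def clamp (T t : ℝ) : ℝ := max (-T) (min T t)

lemma clamp_eq {T t : ℝ} (ht : |t| ≤ T) : clamp T t = t := by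
  rw [abs_le] at ht; unfold clamp
  rw [min_eq_right ht.2, max_eq_right ht.1]

lemma abs_clamp_le (T : ℝ) (hT : 0 ≤ T) (t : ℝ) : |clamp T t| ≤ |t| := by
  unfold clamp
  rcases le_total t T with h1 | h1
  · rw [min_eq_right h1]
    rcases le_total (-T) t with h2 | h2
    · rw [max_eq_right h2]
    · rw [max_eq_left h2, abs_of_nonpos (by linarith), abs_of_nonpos (by linarith)]
      linarith
  · rw [min_eq_left h1, max_eq_right (by linarith), abs_of_nonneg hT,
      abs_of_nonneg (by linarith)]
    exact h1

lemma abs_clamp_le' (T : ℝ) (hT : 0 ≤ T) (t : ℝ) : |clamp T t| ≤ T := by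
  unfold clamp
  rw [abs_le]; constructor
  · simp [le_max_left]
  · rcases le_total (-T) (min T t) with h2 | h2
    · rw [max_eq_right h2]; exact min_le_left _ _
    · rw [max_eq_left h2]; linarith

lemma lipschitz_clamp (T : ℝ) : LipschitzWith 1 (clamp T) := by
  have : LipschitzWith 1 (fun t : ℝ => min T t) :=
    LipschitzWith.id.const_min _
  exact (this.const_max _)

def Phi (G : E → E) (x₀ : E) (T h : ℝ) (y : ℝ → E) : ℝ → E :=
  fun t => x₀ + ∫ s in (0:ℝ)..(clamp T t), G (y (sig h s))

section
variable {G : E → E} {x₀ : E} {R C T h : ℝ}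
variable (hT : 0 < T) (hR : 0 ≤ R) (hh : 0 ≤ h)
  (hG : ContinuousOn G (closedBall x₀ R))
  (hC : ∀ z ∈ closedBall x₀ R, ‖G z‖ ≤ C) (hC0 : 0 ≤ C) (hCT : C * T ≤ R)

include hG in
lemma integrand_cont {y : ℝ → E} (hy : Continuous y) (hyK : ∀ t, y t ∈ closedBall x₀ R) :
    Continuous fun s => G (y (sig h s)) := by
  exact hG.comp_continuous (hy.comp (sig_cont h)) (fun s => hyK _)

include hT hG in
lemma Phi_cont {y : ℝ → E} (hy : Continuous y) (hyK : ∀ t, y t ∈ closedBall x₀ R) :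
    Continuous (Phi G x₀ T h y) := by
  have h1 : Continuous fun c => ∫ s in (0:ℝ)..c, G (y (sig h s)) := by
    have : ∀ c : ℝ, HasDerivAt (fun c' => ∫ s in (0:ℝ)..c', G (y (sig h s)))
        (G (y (sig h c))) c := fun c =>
      primitive_hasDerivAt (integrand_cont hG hy hyK) 0 c
    exact continuous_iff_continuousAt.2 fun c => (this c).continuousAt
  exact continuous_const.add (h1.comp ((lipschitz_clamp T).continuous))

include hT hC hC0 hCT in
lemma Phi_mem {y : ℝ → E} (hyK : ∀ t, y t ∈ closedBall x₀ R) (t : ℝ) :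
    Phi G x₀ T h y t ∈ closedBall x₀ R := by
  rw [Metric.mem_closedBall, dist_eq_norm]
  have : Phi G x₀ T h y t - x₀ = ∫ s in (0:ℝ)..(clamp T t), G (y (sig h s)) := by
    simp [Phi]
  rw [this]
  calc ‖∫ s in (0:ℝ)..(clamp T t), G (y (sig h s))‖
      ≤ C * |clamp T t - 0| :=
        intervalIntegral.norm_integral_le_of_norm_le_const
          (fun s _ => hC _ (hyK _))
    _ ≤ C * T := by
        rw [sub_zero]
        exact mul_le_mul_of_nonneg_left (abs_clamp_le' T hT.le t) hC0
    _ ≤ R := hCT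

include hG hC hC0 in
lemma Phi_lip {y : ℝ → E} (hy : Continuous y) (hyK : ∀ t, y t ∈ closedBall x₀ R)
    (t t' : ℝ) : ‖Phi G x₀ T h y t - Phi G x₀ T h y t'‖ ≤ C * |t - t'| := by
  have hint : Continuous fun s => G (y (sig h s)) := integrand_cont hG hy hyK
  have : Phi G x₀ T h y t - Phi G x₀ T h y t'
      = ∫ s in (clamp T t')..(clamp T t), G (y (sig h s)) := by
    simp only [Phi, add_sub_add_left_eq_sub]
    rw [intervalIntegral.integral_interval_sub_left
      (hint.intervalIntegrable _ _) (hint.intervalIntegrable _ _)]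
  rw [this]
  calc ‖∫ s in (clamp T t')..(clamp T t), G (y (sig h s))‖
      ≤ C * |clamp T t - clamp T t'| :=
        intervalIntegral.norm_integral_le_of_norm_le_const (fun s _ => hC _ (hyK _))
    _ ≤ C * |t - t'| := by
        apply mul_le_mul_of_nonneg_left _ hC0
        have := (lipschitz_clamp T).dist_le_mul t t'
        simpa [Real.dist_eq] using this

include hT in
lemma Phi_zero (y : ℝ → E) : Phi G x₀ T h y 0 = x₀ := by
  have : clamp T (0:ℝ) = 0 := clamp_eq (by simp [hT.le])
  simp [Phi, this]

include hT hG hh in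
lemma Phi_congr {y₁ y₂ : ℝ → E} (hy₁ : Continuous y₁) (hy₁K : ∀ t, y₁ t ∈ closedBall x₀ R)
    (hy₂ : Continuous y₂) (hy₂K : ∀ t, y₂ t ∈ closedBall x₀ R)
    {a : ℝ} (ha : 0 ≤ a) (hagree : ∀ τ, |τ| ≤ a → y₁ τ = y₂ τ) :
    ∀ t, |t| ≤ a + h → Phi G x₀ T h y₁ t = Phi G x₀ T h y₂ t := by
  intro t ht
  have : EqOn (fun s => G (y₁ (sig h s))) (fun s => G (y₂ (sig h s)))
      (Set.uIcc 0 (clamp T t)) := by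
    intro s hs
    have h1 : |s| ≤ |clamp T t| := abs_le_of_mem_uIcc hs
    have h2 : |s| ≤ a + h := h1.trans ((abs_clamp_le T hT.le t).trans ht)
    simp only
    rw [hagree _ (abs_sig_le_of h a hh ha s h2)]
  simp only [Phi]
  rw [intervalIntegral.integral_congr this]


include hT hR hh hG hC hC0 hCT in
lemma exists_approx {k : ℕ} (hk : 1 ≤ k) (hhk : h = T / k) :
    ∃ w : ℝ → E, Continuous w ∧ (∀ t, w t ∈ closedBall x₀ R) ∧
      (∀ t t', ‖w t - w t'‖ ≤ C * |t - t'|) ∧ w 0 = x₀ ∧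
      ∀ t, |t| ≤ T → w t = x₀ + ∫ s in (0:ℝ)..t, G (w (sig h s)) := by
  set y : ℕ → ℝ → E := fun j => (Phi G x₀ T h)^[j] (fun _ => x₀) with hy
  have hystep : ∀ j, y (j+1) = Phi G x₀ T h (y j) := by
    intro j; rw [hy]; simp [Function.iterate_succ_apply']
  have hinv : ∀ j, Continuous (y j) ∧ ∀ t, y j t ∈ closedBall x₀ R := by
    intro j; induction j with
    | zero => exact ⟨continuous_const, fun t => Metric.mem_closedBall_self hR⟩
    | succ j ih =>
      rw [hystep]
      exact ⟨Phi_cont hT hG ih.1 ih.2, Phi_mem hT hC hC0 hCT ih.2⟩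
  have hagree : ∀ j : ℕ, ∀ t : ℝ, |t| ≤ (j : ℝ) * h → y (j+1) t = y j t := by
    intro j; induction j with
    | zero =>
      intro t ht
      simp only [Nat.cast_zero, zero_mul] at ht
      have ht0 : t = 0 := by
        have := abs_nonneg t; have := abs_eq_zero.mp (le_antisymm ht (abs_nonneg t)); exact this
      subst ht0
      rw [hystep, Phi_zero hT]
      rfl
    | succ j ih =>
      intro t ht
      have h1 := hystep (j+1); have h2 := hystep j
      rw [h1]
      conv_rhs => rw [h2]
      rw [h2] at ih
      refine Phi_congr hT hh hG ((hinv (j+1)).1) ((hinv (j+1)).2) ((hinv j).1)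
        ((hinv j).2) (a := (j : ℝ) * h)
        (mul_nonneg (Nat.cast_nonneg j) hh) (fun τ hτ => by rw [h2]; exact ih τ hτ) t ?_
      push_cast at ht ⊢
      linarith
  have hkh : (k : ℝ) * h = T := by
    rw [hhk]; field_simp
  refine ⟨y k, (hinv k).1, (hinv k).2, ?_, ?_, ?_⟩
  · -- Lipschitz
    obtain ⟨k', rfl⟩ : ∃ k', k = k' + 1 := ⟨k - 1, (Nat.succ_pred_eq_of_pos hk).symm⟩
    intro t t'
    rw [hystep]
    exact Phi_lip hG hC hC0 ((hinv k').1) ((hinv k').2) t t'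
  · -- value at 0
    obtain ⟨k', rfl⟩ : ∃ k', k = k' + 1 := ⟨k - 1, (Nat.succ_pred_eq_of_pos hk).symm⟩
    rw [hystep]
    exact Phi_zero hT _
  · -- integral identity
    intro t ht
    have := (hagree k t (by rw [hkh]; exact ht)).symm
    rw [hystep] at this
    rw [this]
    simp only [Phi]
    rw [clamp_eq ht]

end

section PeanoFinal

variable {E : Type*} [NormedAddCommGroup E] [NormedSpace ℝ E] [ProperSpace E]

theorem peano (G : E → E) (x₀ : E) (R : ℝ) (hR : 0 < R)
    (hG : ContinuousOn G (Metric.closedBall x₀ R)) :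
    ∃ δ₀ : ℝ, 0 < δ₀ ∧ ∃ x : ℝ → E, x 0 = x₀ ∧
      ∀ t ∈ Ioo (-δ₀) δ₀, HasDerivAt x (G (x t)) t := by
  obtain ⟨C₀, hC₀⟩ := (isCompact_closedBall x₀ R).exists_bound_of_continuousOn hG
  set C := max C₀ 1 with hCdef
  have hC1 : (1:ℝ) ≤ C := le_max_right _ _
  have hC0 : 0 < C := lt_of_lt_of_le one_pos hC1
  have hC : ∀ z ∈ closedBall x₀ R, ‖G z‖ ≤ C := fun z hz => (hC₀ z hz).trans (le_max_left _ _)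
  set T := R / C with hTdef
  have hT : 0 < T := div_pos hR hC0
  have hCT : C * T ≤ R := by rw [hTdef]; rw [mul_div_cancel₀ _ (ne_of_gt hC0)]
  have hTT : -T ≤ T := by linarith
  -- the approximations
  have happrox : ∀ k : ℕ, ∃ w : ℝ → E, Continuous w ∧ (∀ t, w t ∈ closedBall x₀ R) ∧
      (∀ t t', ‖w t - w t'‖ ≤ C * |t - t'|) ∧ w 0 = x₀ ∧
      ∀ t, |t| ≤ T → w t = x₀ + ∫ s in (0:ℝ)..t, G (w (sig (T / (k+1)) s)) := by
    intro k
    have := exists_approx (h := T / ((k:ℕ)+1)) hT hR.le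
      (by positivity) hG hC hC0.le hCT (k := k+1) (by omega) (by push_cast; ring)
    simpa using this
  choose xs hxs_cont hxs_mem hxs_lip hxs_zero hxs_eq using happrox
  -- Ascoli setup
  set α := ↥(Icc (-T) T) with hα
  have h0mem : (0:ℝ) ∈ Icc (-T) T := ⟨by linarith, hT.le⟩
  set z₀ : α := ⟨0, h0mem⟩ with hz₀
  set fs : ℕ → BoundedContinuousFunction α E := fun k =>
    BoundedContinuousFunction.mkOfCompact
      ⟨fun a => xs k a, (hxs_cont k).comp continuous_subtype_val⟩ with hfs
  have hfs_eval : ∀ k (a : α), fs k a = xs k a := fun k a => rfl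
  set A : Set (BoundedContinuousFunction α E) :=
    {w | (∀ a b : α, dist (w a) (w b) ≤ C * dist a b) ∧
      (∀ a, w a ∈ closedBall x₀ R) ∧ w z₀ = x₀} with hA
  have hAclosed : IsClosed A := by
    have h1 : IsClosed {w : BoundedContinuousFunction α E |
        ∀ a b : α, dist (w a) (w b) ≤ C * dist a b} := by
      simp only [setOf_forall]
      refine isClosed_iInter fun a => isClosed_iInter fun b => ?_
      exact isClosed_le
        ((continuous_eval_const _).dist
          (continuous_eval_const _)) continuous_const
    have h2 : IsClosed {w : BoundedContinuousFunction α E |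
        ∀ a, w a ∈ closedBall x₀ R} := by
      simp only [setOf_forall]
      exact isClosed_iInter fun a =>
        Metric.isClosed_closedBall.preimage (continuous_eval_const _)
    have h3 : IsClosed {w : BoundedContinuousFunction α E | w z₀ = x₀} :=
      isClosed_eq (continuous_eval_const _) continuous_const
    rw [hA]
    simp only [setOf_and]
    exact h1.inter (h2.inter h3)
  have hequi : Equicontinuous ((↑) : A → α → E) := by
    intro a
    rw [Metric.equicontinuousAt_iff]
    intro ε hε
    refine ⟨ε / (C+1), by positivity, fun b hb i => ?_⟩
    have h1 : dist (i.1 a) (i.1 b) ≤ C * dist a b := i.2.1 a b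
    have h3 : dist a b * (C+1) < ε := by
      rw [← lt_div_iff₀ (by positivity)]; rwa [dist_comm] at hb
    calc dist (i.1 a) (i.1 b) ≤ C * dist a b := h1
      _ < ε := by nlinarith [dist_nonneg (x := a) (y := b)]
  have hfsA : ∀ k, fs k ∈ A := by
    intro k
    refine ⟨fun a b => ?_, fun a => hxs_mem k a, ?_⟩
    · rw [hfs_eval, hfs_eval, dist_eq_norm, Subtype.dist_eq, Real.dist_eq]
      exact hxs_lip k a b
    · rw [hfs_eval]; exact hxs_zero k
  have hAcomp : IsCompact A :=
    BoundedContinuousFunction.arzela_ascoli₂ (closedBall x₀ R)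
      (isCompact_closedBall _ _) A hAclosed (fun w a hw => hw.2.1 a) hequi
  obtain ⟨w, hwA, φ, hφmono, hφtend⟩ := hAcomp.tendsto_subseq hfsA
  rw [BoundedContinuousFunction.tendsto_iff_tendstoUniformly] at hφtend
  set xbar : ℝ → E := fun t => w (projIcc (-T) T hTT t) with hxbar
  have hxbar_eval : ∀ t (ht : t ∈ Icc (-T) T), xbar t = w ⟨t, ht⟩ := by
    intro t ht; rw [hxbar]; simp only; rw [projIcc_of_mem]
  have hxbar_cont : Continuous xbar := w.continuous.comp continuous_projIcc
  have hxbar_mem : ∀ t, xbar t ∈ closedBall x₀ R := fun t => hwA.2.1 _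
  have hGx_cont : Continuous fun s => G (xbar s) :=
    hG.comp_continuous hxbar_cont hxbar_mem
  -- the limit integral identity
  have hkey : ∀ t, |t| ≤ T → xbar t = x₀ + ∫ s in (0:ℝ)..t, G (xbar s) := by
    intro t ht
    have htmem : t ∈ Icc (-T) T := by rw [mem_Icc]; exact abs_le.mp ht
    have hL : Tendsto (fun j => xs (φ j) t) atTop (𝓝 (xbar t)) := by
      have := hφtend.tendsto_at ⟨t, htmem⟩
      rw [hxbar_eval t htmem]
      exact this
    have hR2 : Tendsto (fun j => xs (φ j) t) atTop
        (𝓝 (x₀ + ∫ s in (0:ℝ)..t, G (xbar s))) := by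
      have heq : ∀ j, xs (φ j) t
          = x₀ + ∫ s in (0:ℝ)..t, G (xs (φ j) (sig (T / (φ j + 1)) s)) :=
        fun j => hxs_eq (φ j) t ht
      rw [tendsto_congr heq]
      refine Tendsto.const_add x₀ ?_
      rw [Metric.tendsto_atTop]
      intro ε hε
      set ε' := ε / (T+1) with hε'def
      have hε' : 0 < ε' := by positivity
      have hucG : UniformContinuousOn G (closedBall x₀ R) :=
        (isCompact_closedBall x₀ R).uniformContinuousOn_of_continuous hG
      rw [Metric.uniformContinuousOn_iff] at hucG
      obtain ⟨δ, hδpos, hδ⟩ := hucG ε' hε'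
      obtain ⟨N₁, hN₁⟩ := exists_nat_gt (C * T / (δ/2))
      have hsmall : ∀ j ≥ N₁, C * (T / (φ j + 1)) < δ / 2 := by
        intro j hj
        have h1 : (N₁ : ℝ) ≤ φ j + 1 := by
          have h0 : j ≤ φ j := hφmono.le_apply
          have h0' : (j : ℝ) ≤ φ j := by exact_mod_cast h0
          have hjN : (N₁ : ℝ) ≤ j := by exact_mod_cast hj
          linarith
        have h2 : C * T / (δ/2) < φ j + 1 := lt_of_lt_of_le hN₁ h1
        have h3 : (0:ℝ) < (φ j : ℝ) + 1 := by positivity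
        rw [div_lt_iff₀ (by positivity)] at h2
        rw [← mul_div_assoc, div_lt_iff₀ h3]
        linarith
      have hunif := Metric.tendstoUniformly_iff.mp hφtend (δ/2) (by positivity)
      rw [eventually_atTop] at hunif
      obtain ⟨N₂, hN₂⟩ := hunif
      refine ⟨max N₁ N₂, fun j hj => ?_⟩
      have hj1 := le_trans (le_max_left N₁ N₂) hj
      have hj2 := le_trans (le_max_right N₁ N₂) hj
      set hh := T / (φ j + 1) with hhdef
      have hhpos : 0 < hh := by positivity
      have hint1 : Continuous fun s => G (xs (φ j) (sig hh s)) :=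
        hG.comp_continuous ((hxs_cont _).comp (sig_cont hh)) (fun s => hxs_mem _ _)
      rw [dist_eq_norm, ← intervalIntegral.integral_sub
        (hint1.intervalIntegrable _ _) (hGx_cont.intervalIntegrable _ _)]
      have hbound : ∀ s ∈ Set.uIoc (0:ℝ) t,
          ‖G (xs (φ j) (sig hh s)) - G (xbar s)‖ ≤ ε' := by
        intro s hs
        have hsabs : |s| ≤ T := by
          have := abs_le_of_mem_uIcc (Set.uIoc_subset_uIcc hs)
          simpa using this.trans ht
        have hσabs : |sig hh s| ≤ T := (abs_sig_le hh hhpos.le s).trans hsabs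
        have hsmem : s ∈ Icc (-T) T := by rw [mem_Icc]; exact abs_le.mp hsabs
        have hσmem : sig hh s ∈ Icc (-T) T := by rw [mem_Icc]; exact abs_le.mp hσabs
        have hd1 : dist (xs (φ j) (sig hh s)) (xs (φ j) s) < δ / 2 := by
          rw [dist_eq_norm]
          calc ‖xs (φ j) (sig hh s) - xs (φ j) s‖ ≤ C * |sig hh s - s| :=
              hxs_lip _ _ _
            _ ≤ C * hh := by
                exact mul_le_mul_of_nonneg_left (abs_sig_sub_le hh hhpos.le s) hC0.le
            _ < δ / 2 := hsmall j hj1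
        have hd2 : dist (xs (φ j) s) (xbar s) < δ / 2 := by
          have := hN₂ j hj2 ⟨s, hsmem⟩
          rw [hxbar_eval s hsmem]
          rw [← hfs_eval (φ j) ⟨s, hsmem⟩]
          rw [dist_comm]
          exact this
        have hd : dist (xs (φ j) (sig hh s)) (xbar s) < δ :=
          lt_of_le_of_lt (dist_triangle _ (xs (φ j) s) _) (by linarith)
        have := hδ _ (hxs_mem _ _) _ (hxbar_mem s) hd
        rw [dist_eq_norm] at this
        exact this.le
      calc ‖∫ s in (0:ℝ)..t, (G (xs (φ j) (sig hh s)) - G (xbar s))‖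
          ≤ ε' * |t - 0| := intervalIntegral.norm_integral_le_of_norm_le_const hbound
        _ ≤ ε' * T := by
            rw [sub_zero]
            exact mul_le_mul_of_nonneg_left ht hε'.le
        _ < ε := by
            rw [hε'def]
            rw [div_mul_eq_mul_div, div_lt_iff₀ (by linarith)]
            nlinarith
    exact tendsto_nhds_unique hL hR2
  refine ⟨T, hT, xbar, ?_, ?_⟩
  · rw [hxbar_eval 0 h0mem]
    exact hwA.2.2
  · intro t ht
    have hfun : HasDerivAt (fun τ => x₀ + ∫ s in (0:ℝ)..τ, G (xbar s)) (G (xbar t)) t :=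
      (primitive_hasDerivAt hGx_cont 0 t).const_add x₀
    refine hfun.congr_of_eventuallyEq ?_
    filter_upwards [Ioo_mem_nhds ht.1 ht.2] with τ hτ
    exact hkey τ (abs_le.mpr ⟨hτ.1.le, hτ.2.le⟩)

end PeanoFinal

section Stability

variable {n m p : ℕ}
variable {f : EuclideanSpace ℝ (Fin n) × EuclideanSpace ℝ (Fin m) → ℝ}
variable {g : EuclideanSpace ℝ (Fin n) × EuclideanSpace ℝ (Fin m) → EuclideanSpace ℝ (Fin p)}
variable {ustar : EuclideanSpace ℝ (Fin n) → EuclideanSpace ℝ (Fin m)}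
variable (hf : Continuous f) (hg : Continuous g)
variable (hstrict : ∀ x, StrictConvexOn ℝ univ fun u => f (x, u))
variable (hgconv : ∀ x (i : Fin p), ConvexOn ℝ univ fun u => g (x, u) i)
variable (hmin : ∀ x, (∀ i, g (x, ustar x) i ≤ 0) ∧
      ∀ u, (∀ i, g (x, u) i ≤ 0) → f (x, ustar x) ≤ f (x, u))

-- Uniform bound on minimizers over a compact set where `uh` is feasible.
include hf hg hstrict hgconv hmin in
lemma ustar_bound {uh : EuclideanSpace ℝ (Fin m)} {S : Set (EuclideanSpace ℝ (Fin n))}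
    (hS : IsCompact S) (hSfeas : ∀ x ∈ S, ∀ i, g (x, uh) i ≤ 0) :
    ∃ ρ : ℝ, ∀ x ∈ S, ‖ustar x‖ ≤ ρ := by
  by_contra hcon
  push_neg at hcon
  choose z hzS hzlt using fun j : ℕ => hcon (j : ℝ)
  obtain ⟨y, hyS, φ, hφmono, hφtend⟩ := hS.tendsto_subseq hzS
  -- continuity of the components of g
  have hgi : ∀ i : Fin p, Continuous fun q :
      EuclideanSpace ℝ (Fin n) × EuclideanSpace ℝ (Fin m) => g q i :=
    fun i => (continuous_apply i).comp ((PiLp.continuous_ofLp _ _).comp hg)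
  obtain ⟨J₀, hJ₀⟩ := exists_nat_gt (‖uh‖ + 1)
  set u : ℕ → EuclideanSpace ℝ (Fin m) := fun j => ustar (z (φ (j + J₀))) with hu
  have hunorm : ∀ j : ℕ, (1:ℝ) ≤ ‖u j - uh‖ := by
    intro j
    have h1 : ((φ (j + J₀) : ℕ) : ℝ) < ‖ustar (z (φ (j + J₀)))‖ := hzlt _
    have h2 : (j + J₀ : ℕ) ≤ φ (j + J₀) := hφmono.le_apply
    have h3 : (J₀ : ℝ) ≤ ((φ (j + J₀) : ℕ) : ℝ) := by
      have : (J₀ : ℕ) ≤ φ (j + J₀) := le_trans (Nat.le_add_left _ _) h2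
      exact_mod_cast this
    have h4 : ‖uh‖ + 1 < ‖u j‖ := by
      rw [hu]; dsimp only
      calc ‖uh‖ + 1 < (J₀ : ℝ) := hJ₀
        _ ≤ _ := le_trans h3 h1.le
    have := norm_sub_norm_le (u j) uh
    have h5 := norm_sub_norm_le (u j) uh
    linarith [norm_sub_norm_le (u j) uh]
  have hupos : ∀ j : ℕ, (0:ℝ) < ‖u j - uh‖ := fun j => lt_of_lt_of_le one_pos (hunorm j)
  set d : ℕ → EuclideanSpace ℝ (Fin m) := fun j => ‖u j - uh‖⁻¹ • (u j - uh) with hd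
  have hdsphere : ∀ j, d j ∈ sphere (0 : EuclideanSpace ℝ (Fin m)) 1 := by
    intro j
    rw [mem_sphere_zero_iff_norm, hd]
    dsimp only
    rw [norm_smul, norm_inv, norm_norm]
    exact inv_mul_cancel₀ (hupos j).ne'
  obtain ⟨v, hvmem, ψ, hψmono, hψtend⟩ := (isCompact_sphere
    (0 : EuclideanSpace ℝ (Fin m)) 1).tendsto_subseq hdsphere
  have hvnorm : ‖v‖ = 1 := mem_sphere_zero_iff_norm.mp hvmem
  have hvne : v ≠ 0 := by intro h; rw [h, norm_zero] at hvnorm; exact one_ne_zero hvnorm.symm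
  -- final sequences
  set xx : ℕ → EuclideanSpace ℝ (Fin n) := fun j => z (φ (ψ j + J₀)) with hxx
  set uu : ℕ → EuclideanSpace ℝ (Fin m) := fun j => u (ψ j) with huu
  have hxxS : ∀ j, xx j ∈ S := fun j => hzS _
  have hxxtend : Tendsto xx atTop (𝓝 y) := by
    have h1 : Tendsto (fun j => ψ j + J₀) atTop atTop :=
      tendsto_atTop_mono (fun j => Nat.le_add_right _ _) hψmono.tendsto_atTop
    exact hφtend.comp h1
  have huueq : ∀ j, uu j = ustar (xx j) := fun j => rfl
  have hr : ∀ j, (0:ℝ) < ‖uu j - uh‖ := fun j => hupos _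
  have hge : ∀ j : ℕ, (j : ℝ) ≤ ‖uu j - uh‖ := by
    intro j
    have h1 : ((φ (ψ j + J₀) : ℕ) : ℝ) < ‖ustar (xx j)‖ := hzlt _
    have h2 : (j + J₀ : ℕ) ≤ φ (ψ j + J₀) :=
      le_trans (Nat.add_le_add_right hψmono.le_apply J₀) hφmono.le_apply
    have h3 : ((j + J₀ : ℕ) : ℝ) ≤ ((φ (ψ j + J₀) : ℕ) : ℝ) := by exact_mod_cast h2
    have h4 := norm_sub_norm_le (uu j) uh
    have h5 : ((j:ℝ) + J₀) < ‖uu j‖ := by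
      have : ((j + J₀ : ℕ) : ℝ) = (j : ℝ) + J₀ := by push_cast; ring
      rw [← this]
      exact lt_of_le_of_lt h3 h1
    linarith
  have hrtend : Tendsto (fun j => ‖uu j - uh‖) atTop atTop :=
    tendsto_atTop_mono hge tendsto_natCast_atTop_atTop
  have hdtend : Tendsto (fun j => d (ψ j)) atTop (𝓝 v) := hψtend
  -- the ray from uh in direction v is feasible with f-values ≤ f(y, uh)
  have hray : ∀ t : ℝ, 0 ≤ t →
      (∀ i, g (y, uh + t • v) i ≤ 0) ∧ f (y, uh + t • v) ≤ f (y, uh) := by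
    intro t ht
    set wj : ℕ → EuclideanSpace ℝ (Fin m) := fun j => uh + t • (d (ψ j)) with hwj
    have hwtend : Tendsto wj atTop (𝓝 (uh + t • v)) :=
      tendsto_const_nhds.add (hdtend.const_smul t)
    have hkey : ∀ᶠ j in atTop, (∀ i, g (xx j, wj j) i ≤ 0) ∧
        f (xx j, wj j) ≤ f (xx j, uh) := by
      filter_upwards [hrtend.eventually_ge_atTop t] with j htle
      set r := ‖uu j - uh‖ with hrdef
      set lam := t / r with hlam
      have hrpos : 0 < r := hr j
      have hlam0 : 0 ≤ lam := div_nonneg ht hrpos.le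
      have hlam1 : lam ≤ 1 := by
        rw [hlam, div_le_one hrpos]; exact htle
      have hwform : wj j = (1 - lam) • uh + lam • uu j := by
        have h1 : d (ψ j) = r⁻¹ • (uu j - uh) := rfl
        rw [hwj]
        dsimp only
        rw [h1, smul_smul, ← div_eq_mul_inv, ← hlam]
        module
      constructor
      · intro i
        have hcv := (hgconv (xx j) i).2 (mem_univ uh) (mem_univ (uu j))
          (by linarith : (0:ℝ) ≤ 1 - lam) hlam0 (by ring)
        rw [← hwform] at hcv
        have hg1 : g (xx j, uh) i ≤ 0 := hSfeas _ (hxxS j) i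
        have hg2 : g (xx j, uu j) i ≤ 0 := by rw [huueq]; exact (hmin (xx j)).1 i
        have : (1 - lam) • g (xx j, uh) i + lam • g (xx j, uu j) i ≤ 0 := by
          simp only [smul_eq_mul]
          nlinarith
        linarith [hcv, this]
      · have hcf := (hstrict (xx j)).convexOn.2 (mem_univ uh) (mem_univ (uu j))
          (by linarith : (0:ℝ) ≤ 1 - lam) hlam0 (by ring)
        rw [← hwform] at hcf
        have hf2 : f (xx j, uu j) ≤ f (xx j, uh) := by
          rw [huueq]; exact (hmin (xx j)).2 uh (hSfeas _ (hxxS j))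
        simp only [smul_eq_mul] at hcf
        nlinarith
    have htendpair : Tendsto (fun j => (xx j, wj j)) atTop (𝓝 (y, uh + t • v)) :=
      hxxtend.prodMk_nhds hwtend
    constructor
    · intro i
      refine le_of_tendsto (((hgi i).tendsto _).comp htendpair) ?_
      filter_upwards [hkey] with j hj using hj.1 i
    · have htend1 : Tendsto (fun j => f (xx j, wj j)) atTop (𝓝 (f (y, uh + t • v))) :=
        (hf.tendsto _).comp htendpair
      have htend2 : Tendsto (fun j => f (xx j, uh)) atTop (𝓝 (f (y, uh))) :=
        (hf.tendsto _).comp (hxxtend.prodMk_nhds tendsto_const_nhds)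
      refine le_of_tendsto_of_tendsto htend1 htend2 ?_
      filter_upwards [hkey] with j hj using hj.2
  -- transfer the ray to start at ustar y
  set ub := ustar y with hub
  have hshift : ∀ t : ℝ, 0 ≤ t →
      (∀ i, g (y, ub + t • v) i ≤ 0) ∧ f (y, ub + t • v) ≤ f (y, ub) := by
    intro t ht
    set sl : ℕ → ℝ := fun l => 1 / (l + 1) with hsl
    have hslpos : ∀ l : ℕ, 0 < sl l := by
      intro l; rw [hsl]; positivity
    have hsle1 : ∀ l : ℕ, sl l ≤ 1 := by
      intro l; rw [hsl]
      dsimp only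
      rw [div_le_one (by positivity)]
      have : (0:ℝ) ≤ l := Nat.cast_nonneg l
      linarith
    have hsltend : Tendsto sl atTop (𝓝 0) := tendsto_one_div_add_atTop_nhds_zero_nat
    set ql : ℕ → EuclideanSpace ℝ (Fin m) :=
      fun l => (1 - sl l) • ub + sl l • (uh + (t / sl l) • v) with hql
    have hqleq : ∀ l, ql l = (1 - sl l) • ub + sl l • uh + t • v := by
      intro l
      have hne := (hslpos l).ne'
      have hcc : sl l * (t / sl l) = t := by field_simp
      rw [hql]
      dsimp only
      rw [smul_add, smul_smul, hcc, ← add_assoc]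
    have hqltend : Tendsto ql atTop (𝓝 (ub + t • v)) := by
      rw [tendsto_congr hqleq]
      have h1 : Tendsto (fun l => (1 - sl l) • ub) atTop (𝓝 ub) := by
        have := ((tendsto_const_nhds (x := (1:ℝ))).sub hsltend).smul_const ub
        simpa using this
      have h2 : Tendsto (fun l => sl l • uh) atTop (𝓝 0) := by
        have := hsltend.smul_const uh
        simpa using this
      have h3 := (h1.add h2).add (tendsto_const_nhds (x := t • v))
      simpa using h3
    have hkey : ∀ l, (∀ i, g (y, ql l) i ≤ 0) ∧
        f (y, ql l) ≤ (1 - sl l) * f (y, ub) + sl l * f (y, uh) := by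
      intro l
      have hraylt := hray (t / sl l) (div_nonneg ht (hslpos l).le)
      constructor
      · intro i
        have hcv := (hgconv y i).2 (mem_univ ub) (mem_univ (uh + (t / sl l) • v))
          (by linarith [hsle1 l] : (0:ℝ) ≤ 1 - sl l) (hslpos l).le (by ring)
        have hg1 : g (y, ub) i ≤ 0 := (hmin y).1 i
        have hg2 : g (y, uh + (t / sl l) • v) i ≤ 0 := hraylt.1 i
        have hb : (1 - sl l) • g (y, ub) i + sl l • g (y, uh + (t / sl l) • v) i ≤ 0 := by
          simp only [smul_eq_mul]
          nlinarith [hslpos l, hsle1 l]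
        exact le_trans hcv hb
      · have hcf := (hstrict y).convexOn.2 (mem_univ ub) (mem_univ (uh + (t / sl l) • v))
          (by linarith [hsle1 l] : (0:ℝ) ≤ 1 - sl l) (hslpos l).le (by ring)
        have hf2 : f (y, uh + (t / sl l) • v) ≤ f (y, uh) := hraylt.2
        simp only [smul_eq_mul] at hcf
        nlinarith [hslpos l]
    have hqtendpair : Tendsto (fun l => (y, ql l)) atTop (𝓝 (y, ub + t • v)) :=
      tendsto_const_nhds.prodMk_nhds hqltend
    constructor
    · intro i
      refine le_of_tendsto (((hgi i).tendsto _).comp hqtendpair) ?_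
      exact Eventually.of_forall fun l => (hkey l).1 i
    · have htend1 : Tendsto (fun l => f (y, ql l)) atTop (𝓝 (f (y, ub + t • v))) :=
        (hf.tendsto _).comp hqtendpair
      have htend2 : Tendsto (fun l => (1 - sl l) * f (y, ub) + sl l * f (y, uh))
          atTop (𝓝 (f (y, ub))) := by
        have h1 := ((tendsto_const_nhds (x := (1:ℝ))).sub hsltend).mul_const (f (y, ub))
        have h2 := hsltend.mul_const (f (y, uh))
        have h3 := h1.add h2
        have hval : (1-(0:ℝ)) * f (y, ub) + 0 * f (y, uh) = f (y, ub) := by ring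
        rw [hval] at h3
        exact h3
      refine le_of_tendsto_of_tendsto htend1 htend2 ?_
      exact Eventually.of_forall fun l => (hkey l).2
  -- contradiction via strict convexity
  have hone := hshift 1 zero_le_one
  have hhalf := hshift (1/2) (by norm_num)
  have hne2 : ub ≠ ub + v := by
    intro hcon2
    apply hvne
    have := congrArg (fun w => w - ub) hcon2
    simpa using this.symm
  have hstr := (hstrict y).2 (mem_univ ub) (mem_univ (ub + v)) hne2
    (by norm_num : (0:ℝ) < 1/2) (by norm_num : (0:ℝ) < 1/2) (by norm_num)
  have hmid : (1/2 : ℝ) • ub + (1/2 : ℝ) • (ub + v) = ub + (1/2 : ℝ) • v := by module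
  rw [hmid] at hstr
  have hfeasmid : ∀ i, g (y, ub + (1/2:ℝ) • v) i ≤ 0 := hhalf.1
  have hminmid := (hmin y).2 _ hfeasmid
  have hub1 : f (y, ub + v) ≤ f (y, ub) := by
    have := hone.2
    rwa [one_smul] at this
  simp only [smul_eq_mul] at hstr
  rw [← hub] at hminmid
  linarith

include hf hg hstrict hgconv hmin in
lemma ustar_continuousAt {uh : EuclideanSpace ℝ (Fin m)} {xb : EuclideanSpace ℝ (Fin n)}
    (hxb : ∀ i, g (xb, uh) i < 0) : ContinuousAt ustar xb := by
  have hgi : ∀ i : Fin p, Continuous fun q :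
      EuclideanSpace ℝ (Fin n) × EuclideanSpace ℝ (Fin m) => g q i :=
    fun i => (continuous_apply i).comp ((PiLp.continuous_ofLp _ _).comp hg)
  set U : Set (EuclideanSpace ℝ (Fin n)) := {x | ∀ i, g (x, uh) i < 0} with hU
  have hUopen : IsOpen U := by
    have hUeq : U = ⋂ i, {x | g (x, uh) i < 0} := by ext x; simp [hU, mem_iInter]
    rw [hUeq]
    exact isOpen_iInter_of_finite fun i =>
      isOpen_lt ((hgi i).comp (continuous_id.prodMk continuous_const)) continuous_const
  have hxbU : xb ∈ U := hxb
  obtain ⟨ε, hεpos, hεsub⟩ := Metric.isOpen_iff.mp hUopen xb hxbU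
  set r := ε / 2 with hrdef
  have hrpos : 0 < r := by positivity
  have hSsub : closedBall xb r ⊆ U :=
    subset_trans (closedBall_subset_ball (by rw [hrdef]; linarith)) hεsub
  obtain ⟨ρ, hρ⟩ := ustar_bound hf hg hstrict hgconv hmin (isCompact_closedBall xb r)
    (fun x hx i => (hSsub hx i).le)
  rw [ContinuousAt, tendsto_iff_seq_tendsto]
  intro xs hxs
  apply tendsto_of_subseq_tendsto
  intro ns hns
  have hcomp : Tendsto (fun j => xs (ns j)) atTop (𝓝 xb) := hxs.comp hns
  have hball : ∀ᶠ j in atTop, xs (ns j) ∈ closedBall xb r :=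
    hcomp.eventually_mem (Metric.closedBall_mem_nhds xb hrpos)
  rw [eventually_atTop] at hball
  obtain ⟨N, hN⟩ := hball
  set q : ℕ → EuclideanSpace ℝ (Fin n) := fun j => xs (ns (j + N)) with hq
  have hqS : ∀ j, q j ∈ closedBall xb r := fun j => hN _ (Nat.le_add_left _ _)
  have hqtend : Tendsto q atTop (𝓝 xb) := hcomp.comp (tendsto_add_atTop_nat N)
  have hqnorm : ∀ j, ustar (q j) ∈ closedBall (0 : EuclideanSpace ℝ (Fin m)) ρ := by
    intro j; rw [mem_closedBall_zero_iff]; exact hρ _ (hqS j)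
  obtain ⟨wlim, hwmem, ψ, hψmono, hψtend⟩ :=
    (isCompact_closedBall (0 : EuclideanSpace ℝ (Fin m)) ρ).tendsto_subseq hqnorm
  set xx : ℕ → EuclideanSpace ℝ (Fin n) := fun j => q (ψ j) with hxx
  have hxxtend : Tendsto xx atTop (𝓝 xb) := hqtend.comp hψmono.tendsto_atTop
  have huutend : Tendsto (fun j => ustar (xx j)) atTop (𝓝 wlim) := hψtend
  have hfeas : ∀ i, g (xb, wlim) i ≤ 0 := by
    intro i
    have hpair : Tendsto (fun j => (xx j, ustar (xx j))) atTop (𝓝 (xb, wlim)) :=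
      hxxtend.prodMk_nhds huutend
    refine le_of_tendsto (((hgi i).tendsto _).comp hpair) ?_
    exact Eventually.of_forall fun j => (hmin (xx j)).1 i
  have hopt : ∀ u0, (∀ i, g (xb, u0) i ≤ 0) → f (xb, wlim) ≤ f (xb, u0) := by
    intro u0 hu0
    have hstep : ∀ e : ℝ, 0 < e → e ≤ 1 →
        f (xb, wlim) ≤ f (xb, (1-e) • u0 + e • uh) := by
      intro e he0 he1
      have hfeasj : ∀ᶠ j in atTop, ∀ i, g (xx j, (1-e) • u0 + e • uh) i ≤ 0 := by
        rw [eventually_all]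
        intro i
        have hcv : ∀ j, g (xx j, (1-e) • u0 + e • uh) i ≤
            (1-e) * g (xx j, u0) i + e * g (xx j, uh) i := by
          intro j
          have hcc := (hgconv (xx j) i).2 (mem_univ u0) (mem_univ uh)
            (by linarith : (0:ℝ) ≤ 1 - e) he0.le (by ring)
          simpa [smul_eq_mul] using hcc
        have htendc : Tendsto (fun j => (1-e) * g (xx j, u0) i + e * g (xx j, uh) i)
            atTop (𝓝 ((1-e) * g (xb, u0) i + e * g (xb, uh) i)) := by
          have t1 : Tendsto (fun j => g (xx j, u0) i) atTop (𝓝 (g (xb, u0) i)) :=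
            ((hgi i).tendsto _).comp (hxxtend.prodMk_nhds tendsto_const_nhds)
          have t2 : Tendsto (fun j => g (xx j, uh) i) atTop (𝓝 (g (xb, uh) i)) :=
            ((hgi i).tendsto _).comp (hxxtend.prodMk_nhds tendsto_const_nhds)
          exact (t1.const_mul _).add (t2.const_mul _)
        have hlt : (1-e) * g (xb, u0) i + e * g (xb, uh) i < 0 := by
          have h1 : g (xb, u0) i ≤ 0 := hu0 i
          have h2 : g (xb, uh) i < 0 := hxb i
          nlinarith
        filter_upwards [htendc.eventually (gt_mem_nhds hlt)] with j hj
        exact le_of_lt (lt_of_le_of_lt (hcv j) hj)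
      have hfle : ∀ᶠ j in atTop,
          f (xx j, ustar (xx j)) ≤ f (xx j, (1-e) • u0 + e • uh) := by
        filter_upwards [hfeasj] with j hj
        exact (hmin (xx j)).2 _ hj
      have t1 : Tendsto (fun j => f (xx j, ustar (xx j))) atTop (𝓝 (f (xb, wlim))) :=
        (hf.tendsto _).comp (hxxtend.prodMk_nhds huutend)
      have t2 : Tendsto (fun j => f (xx j, (1-e) • u0 + e • uh)) atTop
          (𝓝 (f (xb, (1-e) • u0 + e • uh))) :=
        (hf.tendsto _).comp (hxxtend.prodMk_nhds tendsto_const_nhds)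
      exact le_of_tendsto_of_tendsto t1 t2 hfle
    set sl : ℕ → ℝ := fun l => 1 / (l + 1) with hsl
    have hslpos : ∀ l : ℕ, 0 < sl l := fun l => by rw [hsl]; positivity
    have hsle1 : ∀ l : ℕ, sl l ≤ 1 := by
      intro l
      rw [hsl]
      dsimp only
      rw [div_le_one (by positivity)]
      have : (0:ℝ) ≤ l := Nat.cast_nonneg l
      linarith
    have hsltend : Tendsto sl atTop (𝓝 0) := tendsto_one_div_add_atTop_nhds_zero_nat
    have hpt : Tendsto (fun l => (1 - sl l) • u0 + sl l • uh) atTop (𝓝 u0) := by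
      have h1 : Tendsto (fun l => (1 - sl l) • u0) atTop (𝓝 u0) := by
        have := ((tendsto_const_nhds (x := (1:ℝ))).sub hsltend).smul_const u0
        simpa using this
      have h2 : Tendsto (fun l => sl l • uh) atTop
          (𝓝 (0 : EuclideanSpace ℝ (Fin m))) := by
        have := hsltend.smul_const uh
        simpa using this
      have h3 := h1.add h2
      simpa using h3
    have t3 : Tendsto (fun l => f (xb, (1 - sl l) • u0 + sl l • uh)) atTop
        (𝓝 (f (xb, u0))) :=
      (hf.tendsto _).comp (tendsto_const_nhds.prodMk_nhds hpt)
    refine le_of_tendsto_of_tendsto tendsto_const_nhds t3 ?_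
    exact Eventually.of_forall fun l => hstep (sl l) (hslpos l) (hsle1 l)
  have hweq : wlim = ustar xb := by
    by_contra hne
    have hf1 : f (xb, wlim) ≤ f (xb, ustar xb) := hopt _ ((hmin xb).1)
    have hf2 : f (xb, ustar xb) ≤ f (xb, wlim) := (hmin xb).2 _ hfeas
    have hstr := (hstrict xb).2 (mem_univ wlim) (mem_univ (ustar xb)) hne
      (by norm_num : (0:ℝ) < 1/2) (by norm_num : (0:ℝ) < 1/2) (by norm_num)
    have hmfeas : ∀ i, g (xb, (1/2:ℝ) • wlim + (1/2:ℝ) • ustar xb) i ≤ 0 := by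
      intro i
      have hcv2 := (hgconv xb i).2 (mem_univ wlim) (mem_univ (ustar xb))
        (by norm_num : (0:ℝ) ≤ 1/2) (by norm_num : (0:ℝ) ≤ 1/2) (by norm_num)
      have hb : (1/2:ℝ) • g (xb, wlim) i + (1/2:ℝ) • g (xb, ustar xb) i ≤ 0 := by
        simp only [smul_eq_mul]
        have hc1 := hfeas i
        have hc2 := (hmin xb).1 i
        linarith
      exact le_trans hcv2 hb
    have hminmid := (hmin xb).2 _ hmfeas
    simp only [smul_eq_mul] at hstr
    linarith
  refine ⟨fun j => ψ j + N, ?_⟩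
  rw [hweq] at huutend
  exact huutend


end Stability
end Stmt6Aux
end

/-- Existence of classical solutions for the closed-loop system. The data
`f, g` are continuous, of class `C^{0,2}` (i.e., `u ↦ f(x,u)`, `u ↦ g(x,u)` are twice
continuously differentiable and the partial derivatives in `u` up to order two are
continuous jointly in `(x,u)`), `f(x,·)` is strictly convex, each `g_i(x,·)` is convex,
and `P(x)` has a (unique) minimizer `u*(x)` for every `x`. If Slater's condition holds
at `x₀` and `F` is locally Lipschitz, then there exist `δ₀ > 0` and a solution
`x : (−δ₀, δ₀) → ℝ^n` of `ẋ = F(x, u*(x))` with `x(0) = x₀`. -/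
theorem stmt_6 {n m p : ℕ}
    (f : EuclideanSpace ℝ (Fin n) × EuclideanSpace ℝ (Fin m) → ℝ)
    (g : EuclideanSpace ℝ (Fin n) × EuclideanSpace ℝ (Fin m) → EuclideanSpace ℝ (Fin p))
    (ustar : EuclideanSpace ℝ (Fin n) → EuclideanSpace ℝ (Fin m))
    (F : EuclideanSpace ℝ (Fin n) × EuclideanSpace ℝ (Fin m) → EuclideanSpace ℝ (Fin n))
    (hf : Continuous f) (hg : Continuous g)
    (hfu : ∀ x, ContDiff ℝ 2 fun u => f (x, u))
    (hgu : ∀ x, ContDiff ℝ 2 fun u => g (x, u))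
    (hfu1 : Continuous fun q : EuclideanSpace ℝ (Fin n) × EuclideanSpace ℝ (Fin m) =>
      iteratedFDeriv ℝ 1 (fun u => f (q.1, u)) q.2)
    (hfu2 : Continuous fun q : EuclideanSpace ℝ (Fin n) × EuclideanSpace ℝ (Fin m) =>
      iteratedFDeriv ℝ 2 (fun u => f (q.1, u)) q.2)
    (hgu1 : Continuous fun q : EuclideanSpace ℝ (Fin n) × EuclideanSpace ℝ (Fin m) =>
      iteratedFDeriv ℝ 1 (fun u => g (q.1, u)) q.2)
    (hgu2 : Continuous fun q : EuclideanSpace ℝ (Fin n) × EuclideanSpace ℝ (Fin m) =>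
      iteratedFDeriv ℝ 2 (fun u => g (q.1, u)) q.2)
    (hstrict : ∀ x, StrictConvexOn ℝ univ fun u => f (x, u))
    (hgconv : ∀ x (i : Fin p), ConvexOn ℝ univ fun u => g (x, u) i)
    (hmin : ∀ x, (∀ i, g (x, ustar x) i ≤ 0) ∧
      ∀ u, (∀ i, g (x, u) i ≤ 0) → f (x, ustar x) ≤ f (x, u))
    (x₀ : EuclideanSpace ℝ (Fin n))
    (hslater : ∃ uhat, ∀ i, g (x₀, uhat) i < 0)
    (hF : LocallyLipschitz F) :
    ∃ δ₀ : ℝ, 0 < δ₀ ∧ ∃ x : ℝ → EuclideanSpace ℝ (Fin n), x 0 = x₀ ∧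
      ∀ t ∈ Ioo (-δ₀) δ₀, HasDerivAt x (F (x t, ustar (x t))) t := by
  classical
  obtain ⟨uh, huh⟩ := hslater
  have hgi : ∀ i : Fin p, Continuous fun q :
      EuclideanSpace ℝ (Fin n) × EuclideanSpace ℝ (Fin m) => g q i :=
    fun i => (continuous_apply i).comp ((PiLp.continuous_ofLp _ _).comp hg)
  set U : Set (EuclideanSpace ℝ (Fin n)) := {x | ∀ i, g (x, uh) i < 0} with hU
  have hUopen : IsOpen U := by
    have hUeq : U = ⋂ i, {x | g (x, uh) i < 0} := by ext x; simp [hU, Set.mem_iInter]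
    rw [hUeq]
    exact isOpen_iInter_of_finite fun i =>
      isOpen_lt ((hgi i).comp (continuous_id.prodMk continuous_const)) continuous_const
  have hx₀U : x₀ ∈ U := huh
  obtain ⟨ε, hεpos, hεsub⟩ := Metric.isOpen_iff.mp hUopen x₀ hx₀U
  set R := ε / 2 with hRdef
  have hRpos : 0 < R := by positivity
  have hsub : Metric.closedBall x₀ R ⊆ U :=
    subset_trans (Metric.closedBall_subset_ball (by rw [hRdef]; linarith)) hεsub
  set G : EuclideanSpace ℝ (Fin n) → EuclideanSpace ℝ (Fin n) :=
    fun y => F (y, ustar y) with hGdef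
  have hGcont : ContinuousOn G (Metric.closedBall x₀ R) := by
    intro y hy
    have hyU : y ∈ U := hsub hy
    have hustar : ContinuousAt ustar y :=
      Stmt6Aux.ustar_continuousAt hf hg hstrict hgconv hmin (fun i => hyU i)
    exact ((hF.continuous.continuousAt).comp
      (continuousAt_id.prodMk hustar)).continuousWithinAt
  obtain ⟨δ₀, hδ₀, x, hx0, hxderiv⟩ := Stmt6Aux.peano G x₀ R hRpos hGcont
  exact ⟨δ₀, hδ₀, x, hx0, fun t ht => hxderiv t ht⟩
end

section
/- Define u₄ : ℝ² → ℝ by u₄(x₁,x₂) = 0 if x₂ ≤ 0; u₄(x₁,x₂) = x₂/x₁ if x₂ ≥ 0, x₁ ≠ 0 and x₁²/2 ≥ x₂; and u₄(x₁,x₂) = x₁(x₂+1)/(x₁²+2) otherwise. Then u₄ is not locally Lipschitz at the origin: for every neighborhood U of (0,0) and every L ≥ 0 there exist points x, y ∈ U with |u₄(x) − u₄(y)| > L‖x − y‖. In particular, for p(s) = (s, s²/2) and q(s) = (s, 0) with s > 0, one has |u₄(p(s)) − u₄(q(s))| / ‖p(s) − q(s)‖ = 1/s. -/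
open Set Filter

/-- The fourth component of the parametric optimizer of Robinson's counterexample. -/
noncomputable def u4 (x : ℝ × ℝ) : ℝ :=
  if x.2 ≤ 0 then 0
  else if 0 ≤ x.2 ∧ x.1 ≠ 0 ∧ x.2 ≤ x.1 ^ 2 / 2 then x.2 / x.1
  else x.1 * (x.2 + 1) / (x.1 ^ 2 + 2)

lemma u4_p {s : ℝ} (hs : 0 < s) : u4 (s, s ^ 2 / 2) = s / 2 := by
  have h1 : ¬ ((s : ℝ) ^ 2 / 2 ≤ 0) := by push_neg; positivity
  rw [u4, if_neg h1, if_pos ⟨by positivity, hs.ne', le_refl _⟩]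
  field_simp

lemma u4_q (s : ℝ) : u4 (s, 0) = 0 := by
  rw [u4, if_pos le_rfl]

lemma norm_pq {s : ℝ} (hs : 0 < s) :
    ‖((s, s ^ 2 / 2) : ℝ × ℝ) - (s, 0)‖ = s ^ 2 / 2 := by
  have : ((s, s ^ 2 / 2) : ℝ × ℝ) - (s, 0) = (0, s ^ 2 / 2) := by
    simp
  rw [this, Prod.norm_def]
  simp [Real.norm_eq_abs, abs_of_nonneg (by positivity : (0:ℝ) ≤ s ^ 2 / 2)]
  positivity

/-- `u₄` is not locally Lipschitz at the origin; in particular, for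
`p(s) = (s, s²/2)` and `q(s) = (s, 0)` with `s > 0`, the difference quotient equals `1/s`. -/
theorem stmt_10 :
    (∀ U ∈ nhds ((0, 0) : ℝ × ℝ), ∀ L : ℝ, 0 ≤ L →
      ∃ x ∈ U, ∃ y ∈ U, L * ‖x - y‖ < |u4 x - u4 y|) ∧
    (∀ s : ℝ, 0 < s →
      |u4 (s, s ^ 2 / 2) - u4 (s, 0)| / ‖((s, s ^ 2 / 2) : ℝ × ℝ) - (s, 0)‖ = 1 / s) := by
  constructor
  · intro U hU L hL
    obtain ⟨ε, hε, hball⟩ := Metric.mem_nhds_iff.mp hU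
    set s : ℝ := min (ε / 2) (min 1 (1 / (L + 1))) with hs_def
    have hL1 : 0 < L + 1 := by linarith
    have hs : 0 < s := by
      apply lt_min (by linarith) (lt_min one_pos (by positivity))
    have hs1 : s ≤ 1 := le_trans (min_le_right _ _) (min_le_left _ _)
    have hsε : s < ε := lt_of_le_of_lt (min_le_left _ _) (by linarith)
    have hsL : s * (L + 1) ≤ 1 := by
      have : s ≤ 1 / (L + 1) := le_trans (min_le_right _ _) (min_le_right _ _)
      calc s * (L + 1) ≤ (1 / (L + 1)) * (L + 1) := by nlinarith
        _ = 1 := by field_simp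
    have hmem1 : ((s, s ^ 2 / 2) : ℝ × ℝ) ∈ U := by
      apply hball
      rw [Metric.mem_ball, dist_eq_norm]
      simp only [Prod.norm_def]
      have h2 : s ^ 2 / 2 ≤ s := by nlinarith
      simp [Real.norm_eq_abs, abs_of_nonneg hs.le,
        abs_of_nonneg (by positivity : (0:ℝ) ≤ s ^ 2 / 2)]
      constructor <;> [exact hsε; linarith]
    have hmem2 : ((s, 0) : ℝ × ℝ) ∈ U := by
      apply hball
      rw [Metric.mem_ball, dist_eq_norm]
      simp only [Prod.norm_def]
      simp [Real.norm_eq_abs, abs_of_nonneg hs.le]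
      exact ⟨hsε, hε⟩
    refine ⟨(s, s ^ 2 / 2), hmem1, (s, 0), hmem2, ?_⟩
    rw [norm_pq hs, u4_p hs, u4_q]
    rw [abs_of_nonneg (by linarith : (0:ℝ) ≤ s / 2 - 0)]
    nlinarith
  · intro s hs
    rw [norm_pq hs, u4_p hs, u4_q,
      abs_of_nonneg (by linarith : (0:ℝ) ≤ s / 2 - 0)]
    field_simp
    ring
end

section
/- Define u₄ : ℝ² → ℝ by u₄(x₁,x₂) = 0 if x₂ ≤ 0; u₄(x₁,x₂) = x₂/x₁ if x₂ ≥ 0, x₁ ≠ 0 and x₁²/2 ≥ x₂; and u₄(x₁,x₂) = x₁(x₂+1)/(x₁²+2) otherwise. Then u₄ is continuous at the origin and, moreover, point-Lipschitz at the origin. -/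
open Set Filter

lemma u4_zero : u4 (0, 0) = 0 := by simp [u4]

lemma u4_bound (x : ℝ × ℝ) (hx : ‖x‖ ≤ 1) : |u4 x| ≤ ‖x‖ := by
  have h1 : |x.1| ≤ ‖x‖ := norm_fst_le x
  have h2 : |x.2| ≤ ‖x‖ := norm_snd_le x
  have hn : (0:ℝ) ≤ ‖x‖ := norm_nonneg x
  unfold u4
  split_ifs with hc hd
  · simpa using hn
  · obtain ⟨h0, hne, hle⟩ := hd
    have hx1 : 0 < |x.1| := abs_pos.mpr hne
    rw [abs_div]
    rw [div_le_iff₀ hx1]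
    have : |x.2| = x.2 := abs_of_nonneg h0
    rw [this]
    calc x.2 ≤ x.1 ^ 2 / 2 := hle
      _ = |x.1| * |x.1| / 2 := by rw [abs_mul_abs_self]; ring
      _ ≤ ‖x‖ * |x.1| := by
          rw [div_le_iff₀ (by norm_num : (0:ℝ) < 2)]
          nlinarith
  · rw [abs_div, abs_of_pos (by positivity : (0:ℝ) < x.1 ^ 2 + 2)]
    rw [div_le_iff₀ (by positivity)]
    have h2' : |x.2| ≤ 1 := le_trans h2 hx
    have : |x.1 * (x.2 + 1)| ≤ |x.1| * 2 := by
      rw [abs_mul]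
      have : |x.2 + 1| ≤ 2 := by
        calc |x.2 + 1| ≤ |x.2| + 1 := by have := abs_add_le x.2 1; simpa using this
          _ ≤ 2 := by linarith
      nlinarith [abs_nonneg x.1]
    calc |x.1 * (x.2 + 1)| ≤ |x.1| * 2 := this
      _ ≤ ‖x‖ * 2 := by linarith
      _ ≤ ‖x‖ * (x.1 ^ 2 + 2) := by nlinarith [sq_nonneg x.1]

/-- `u₄` is continuous at the origin and point-Lipschitz at the origin. -/
theorem stmt_11 :
    ContinuousAt u4 (0, 0) ∧
    ∃ U ∈ nhds ((0, 0) : ℝ × ℝ), ∃ L : ℝ, 0 ≤ L ∧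
      ∀ x ∈ U, |u4 x - u4 (0, 0)| ≤ L * ‖x - ((0, 0) : ℝ × ℝ)‖ := by
  constructor
  · rw [ContinuousAt, u4_zero]
    have hb : ∀ᶠ x : ℝ × ℝ in nhds (0, 0), ‖u4 x‖ ≤ ‖x - (0,0)‖ := by
      filter_upwards [Metric.ball_mem_nhds ((0,0) : ℝ × ℝ) one_pos] with x hx
      have : ‖x‖ ≤ 1 := le_of_lt (by simpa [Metric.mem_ball, dist_eq_norm, Prod.mk_zero_zero] using hx)
      simpa [Prod.mk_zero_zero] using u4_bound x this
    exact squeeze_zero_norm' hb (by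
      have : Filter.Tendsto (fun x : ℝ × ℝ => ‖x - (0,0)‖) (nhds (0,0)) (nhds ‖((0,0):ℝ×ℝ) - (0,0)‖) :=
        ((continuous_id.sub continuous_const).norm).continuousAt
      simpa using this)
  · refine ⟨Metric.ball (0,0) 1, Metric.ball_mem_nhds _ one_pos, 1, zero_le_one, ?_⟩
    intro x hx
    have : ‖x‖ ≤ 1 := le_of_lt (by simpa [Metric.mem_ball, dist_eq_norm, Prod.mk_zero_zero] using hx)
    rw [u4_zero, sub_zero, one_mul]
    simpa [Prod.mk_zero_zero] using u4_bound x this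
end

section
/- Define u₄ : ℝ² → ℝ by u₄(x₁,x₂) = 0 if x₂ ≤ 0; u₄(x₁,x₂) = x₂/x₁ if x₂ ≥ 0, x₁ ≠ 0 and x₁²/2 ≥ x₂; and u₄(x₁,x₂) = x₁(x₂+1)/(x₁²+2) otherwise. Consider the planar system ẋ₁ = 1/2, ẋ₂ = u₄(x₁,x₂). The two curves y₁(t) = (t/2, 0) and y₂(t) = (t/2, t²/8), defined for t ≥ 0, are both solutions of this system with initial condition (0,0): each is differentiable with y'(t) equal to (1/2, u₄(y(t))) for all t ≥ 0 and y(0) = (0,0). Moreover y₁ ≠ y₂ (for instance y₁(t) ≠ y₂(t) for every t > 0). Hence the system has non-unique solutions from the origin. -/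
open Set Filter

lemma u4_y1 (t : ℝ) : u4 (t / 2, 0) = 0 := by simp [u4]

lemma u4_y2 (t : ℝ) (ht : 0 ≤ t) : u4 (t / 2, t ^ 2 / 8) = t / 4 := by
  rcases eq_or_lt_of_le ht with h | h
  · simp [u4, ← h]
  · have h1 : ¬ (t ^ 2 / 8 ≤ 0) := by push_neg; positivity
    have h2 : t / 2 ≠ 0 := ne_of_gt (by positivity)
    have h3 : t ^ 2 / 8 ≤ (t / 2) ^ 2 / 2 := by nlinarith
    rw [u4]
    simp only [h1, if_false, h3, h2, le_of_lt (by positivity : (0:ℝ) < t ^ 2 / 8),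
      and_self, true_and, if_true, ne_eq, not_false_eq_true]
    field_simp
    ring

/-- The planar system `ẋ₁ = 1/2`, `ẋ₂ = u₄(x₁,x₂)` admits the two distinct
solutions `y₁(t) = (t/2, 0)` and `y₂(t) = (t/2, t²/8)` on `[0,∞)` with initial condition
`(0,0)`; hence solutions from the origin are non-unique. -/
theorem stmt_15 :
    ((fun t : ℝ => ((t / 2, 0) : ℝ × ℝ)) 0 = (0, 0)) ∧
    ((fun t : ℝ => ((t / 2, t ^ 2 / 8) : ℝ × ℝ)) 0 = (0, 0)) ∧
    (∀ t : ℝ, 0 ≤ t → HasDerivWithinAt (fun t : ℝ => ((t / 2, 0) : ℝ × ℝ))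
      (1 / 2, u4 (t / 2, 0)) (Ici 0) t) ∧
    (∀ t : ℝ, 0 ≤ t → HasDerivWithinAt (fun t : ℝ => ((t / 2, t ^ 2 / 8) : ℝ × ℝ))
      (1 / 2, u4 (t / 2, t ^ 2 / 8)) (Ici 0) t) ∧
    (∀ t : ℝ, 0 < t → ((t / 2, 0) : ℝ × ℝ) ≠ (t / 2, t ^ 2 / 8)) := by
  have hd1 : ∀ t : ℝ, HasDerivWithinAt (fun t : ℝ => t / 2) (1 / 2) (Ici 0) t := by
    intro t
    simpa using ((hasDerivAt_id t).div_const 2).hasDerivWithinAt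
  refine ⟨by norm_num, by norm_num, ?_, ?_, ?_⟩
  · intro t ht
    rw [u4_y1]
    exact (hd1 t).prodMk (hasDerivWithinAt_const _ _ 0)
  · intro t ht
    rw [u4_y2 t ht]
    refine (hd1 t).prodMk ?_
    have : HasDerivWithinAt (fun t : ℝ => t ^ 2 / 8) (2 * t ^ 1 / 8) (Ici 0) t :=
      ((hasDerivAt_pow 2 t).div_const 8).hasDerivWithinAt
    rw [show (t / 4 : ℝ) = 2 * t ^ 1 / 8 by ring]; exact this
  · intro t ht h
    have := (Prod.mk.injEq _ _ _ _).mp h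
    nlinarith [this.2]
end

section
/- Define u₄ : ℝ² → ℝ by u₄(x₁,x₂) = 0 if x₂ ≤ 0; u₄(x₁,x₂) = x₂/x₁ if x₂ ≥ 0, x₁ ≠ 0 and x₁²/2 ≥ x₂; and u₄(x₁,x₂) = x₁(x₂+1)/(x₁²+2) otherwise. Let 𝒞 = {(x₁,x₂) ∈ ℝ² : x₂ ≤ 0}. Then the vector field G(x₁,x₂) = (1/2, u₄(x₁,x₂)) satisfies the sub-tangentiality condition G(x) ∈ T_𝒞(x) for every x ∈ 𝒞 (where T_𝒞(x) is the tangent cone to 𝒞 at x; in particular T_𝒞(x) = ℝ² if x₂ < 0 and T_𝒞(x₁,0) = {(ξ₁,ξ₂) : ξ₂ ≤ 0}), yet 𝒞 is not forward invariant for ẋ = G(x): the solution y₂(t) = (t/2, t²/8) satisfies y₂(0) ∈ 𝒞 and y₂(t) ∉ 𝒞 for all t > 0. -/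
open Set Filter

/-- The tangent cone `T_𝒞(x) = {v : liminf_{h→0⁺} dist(x+hv, 𝒞)/h = 0}`. -/
noncomputable def tangentConeTo (C : Set (ℝ × ℝ)) (x : ℝ × ℝ) : Set (ℝ × ℝ) :=
  {v | Filter.liminf (fun h : ℝ => Metric.infDist (x + h • v) C / h)
      (nhdsWithin 0 (Ioi 0)) = 0}

lemma infDist_halfplane (p : ℝ × ℝ) :
    Metric.infDist p {x : ℝ × ℝ | x.2 ≤ 0} = max p.2 0 := by
  apply le_antisymm
  · have hmem : ((p.1, min p.2 0) : ℝ × ℝ) ∈ {x : ℝ × ℝ | x.2 ≤ 0} := by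
      simp [min_le_right]
    calc Metric.infDist p {x : ℝ × ℝ | x.2 ≤ 0} ≤ dist p (p.1, min p.2 0) :=
          Metric.infDist_le_dist_of_mem hmem
      _ = max p.2 0 := by
          rw [Prod.dist_eq]
          simp [Real.dist_eq]
          rcases le_or_gt p.2 0 with h | h
          · simp [min_eq_left h, max_eq_right h]
          · rw [min_eq_right h.le, max_eq_left h.le, sub_zero, abs_of_pos h]
  · by_contra hlt
    push_neg at hlt
    obtain ⟨q, hq, hdq⟩ := (Metric.infDist_lt_iff ⟨(0,0), by simp⟩).mp hlt
    simp only [mem_setOf_eq] at hq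
    have h1 : dist p.2 q.2 ≤ dist p q := le_max_right _ _
    have h2 : p.2 - q.2 ≤ dist p.2 q.2 := by rw [Real.dist_eq]; exact le_abs_self _
    have h3 : p.2 ≤ dist p q := by linarith
    exact absurd hdq (not_lt.mpr (max_le h3 dist_nonneg))

lemma tangent_mem_of_le (x v : ℝ × ℝ) (hx : x.2 ≤ 0) (hv : x.2 < 0 ∨ v.2 ≤ 0) :
    Filter.liminf (fun h : ℝ => Metric.infDist (x + h • v) {x : ℝ × ℝ | x.2 ≤ 0} / h)
      (nhdsWithin 0 (Ioi 0)) = 0 := by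
  have hev : ∀ᶠ h : ℝ in nhdsWithin 0 (Ioi 0),
      Metric.infDist (x + h • v) {x : ℝ × ℝ | x.2 ≤ 0} / h = 0 := by
    rcases hv with hx2 | hv2
    · -- x.2 < 0 : eventually x.2 + h*v.2 < 0
      have hcont : Tendsto (fun h : ℝ => x.2 + h * v.2) (nhdsWithin 0 (Ioi 0)) (nhds x.2) := by
        have : Tendsto (fun h : ℝ => x.2 + h * v.2) (nhds 0) (nhds (x.2 + 0 * v.2)) :=
          (continuous_const.add (continuous_id.mul continuous_const)).tendsto 0
        simpa using this.mono_left nhdsWithin_le_nhds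
      filter_upwards [hcont.eventually (Filter.Tendsto.eventually_lt_const hx2 tendsto_id
        |>.mono (fun _ h => h))] with h hh
      · have hm : x + h • v ∈ {x : ℝ × ℝ | x.2 ≤ 0} := by
          simp only [mem_setOf_eq, Prod.snd_add, Prod.smul_snd, smul_eq_mul]
          exact hh.le
        rw [Metric.infDist_zero_of_mem hm, zero_div]
    · filter_upwards [self_mem_nhdsWithin] with h hh
      have hm : x + h • v ∈ {x : ℝ × ℝ | x.2 ≤ 0} := by
        simp only [mem_setOf_eq, Prod.snd_add, Prod.smul_snd, smul_eq_mul]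
        have : h * v.2 ≤ 0 := mul_nonpos_of_nonneg_of_nonpos (le_of_lt hh) hv2
        linarith
      rw [Metric.infDist_zero_of_mem hm, zero_div]
  exact (liminf_congr hev).trans (liminf_const (0 : ℝ))

/-- For `𝒞 = {x : x₂ ≤ 0}` the vector field `G(x) = (1/2, u₄(x))` satisfies
the sub-tangentiality condition `G(x) ∈ T_𝒞(x)` for all `x ∈ 𝒞` (with
`T_𝒞(x) = ℝ²` for `x₂ < 0` and `T_𝒞(x₁,0) = {ξ : ξ₂ ≤ 0}`), yet `𝒞` is not forward
invariant: the solution `y₂(t) = (t/2, t²/8)` starts in `𝒞` and leaves it for all `t > 0`. -/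
theorem stmt_17 :
    (∀ x ∈ {x : ℝ × ℝ | x.2 ≤ 0},
      ((1 / 2, u4 x) : ℝ × ℝ) ∈ tangentConeTo {x : ℝ × ℝ | x.2 ≤ 0} x) ∧
    (∀ x : ℝ × ℝ, x.2 < 0 → tangentConeTo {x : ℝ × ℝ | x.2 ≤ 0} x = univ) ∧
    (∀ x₁ : ℝ, tangentConeTo {x : ℝ × ℝ | x.2 ≤ 0} (x₁, 0) = {v : ℝ × ℝ | v.2 ≤ 0}) ∧
    (((fun t : ℝ => ((t / 2, t ^ 2 / 8) : ℝ × ℝ)) 0 ∈ {x : ℝ × ℝ | x.2 ≤ 0}) ∧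
      (∀ t : ℝ, 0 ≤ t → HasDerivWithinAt (fun t : ℝ => ((t / 2, t ^ 2 / 8) : ℝ × ℝ))
        (1 / 2, u4 (t / 2, t ^ 2 / 8)) (Ici 0) t) ∧
      (∀ t : ℝ, 0 < t → ((t / 2, t ^ 2 / 8) : ℝ × ℝ) ∉ {x : ℝ × ℝ | x.2 ≤ 0})) := by
  refine ⟨?_, ?_, ?_, ?_, ?_, ?_⟩
  · intro x hx
    have hx' : x.2 ≤ 0 := hx
    rcases lt_or_eq_of_le hx' with h | h
    · exact tangent_mem_of_le x _ hx (Or.inl h)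
    · have hu : u4 x = 0 := by simp [u4, le_of_eq h]
      exact tangent_mem_of_le x _ hx (Or.inr (by simp [hu]))
  · intro x hx
    ext v
    simp only [mem_univ, iff_true, tangentConeTo, mem_setOf_eq]
    exact tangent_mem_of_le x v hx.le (Or.inl hx)
  · intro x₁
    ext v
    simp only [tangentConeTo, mem_setOf_eq]
    constructor
    · intro hlim
      by_contra hv
      push_neg at hv
      have hev : ∀ᶠ h : ℝ in nhdsWithin 0 (Ioi 0),
          Metric.infDist ((x₁, 0) + h • v) {x : ℝ × ℝ | x.2 ≤ 0} / h = v.2 := by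
        filter_upwards [self_mem_nhdsWithin] with h hh
        rw [infDist_halfplane]
        simp only [Prod.snd_add, Prod.smul_snd, smul_eq_mul]
        have hpos : 0 < h * v.2 := mul_pos hh hv
        rw [max_eq_left (by linarith)]
        rw [zero_add, mul_comm, mul_div_assoc, div_self (ne_of_gt (hh : (0:ℝ) < h)), mul_one]
      have := (liminf_congr hev).trans (liminf_const v.2)
      rw [hlim] at this
      exact absurd this.symm (ne_of_gt hv)
    · intro hv
      exact tangent_mem_of_le (x₁, 0) v le_rfl (Or.inr hv)
  · simp
  · intro t ht
    have h2 : HasDerivWithinAt (fun t : ℝ => t / 2) (1 / 2) (Ici 0) t := by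
      simpa using ((hasDerivAt_id t).div_const 2).hasDerivWithinAt
    have h8 : HasDerivWithinAt (fun t : ℝ => t ^ 2 / 8) (t / 4) (Ici 0) t := by
      have := ((hasDerivAt_pow 2 t).div_const 8).hasDerivWithinAt (s := Ici 0)
      exact this.congr_deriv (by ring)
    have hu : u4 (t / 2, t ^ 2 / 8) = t / 4 := by
      rcases eq_or_lt_of_le ht with h | h
      · simp [u4, ← h]
      · have h1 : ¬ (t ^ 2 / 8 ≤ 0) := by push_neg; positivity
        have h2' : (0:ℝ) ≤ t ^ 2 / 8 := by positivity
        have h3 : t / 2 ≠ 0 := by positivity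
        have h4 : t ^ 2 / 8 ≤ (t / 2) ^ 2 / 2 := by nlinarith
        have ht0 : t ≠ 0 := ne_of_gt h
        rw [u4, if_neg h1, if_pos ⟨h2', h3, h4⟩]
        field_simp
        ring
      -- done
    rw [← hu] at h8
    exact h2.prodMk h8
  · intro t ht
    simp only [mem_setOf_eq, not_le]
    positivity
end
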